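/- arXiv:2510.19259 — 3 statements merged into one kernel-verified Lean document; each statement's English description precedes it below -/
import Mathlib

section
/- Let I, K ⊆ J ⊆ Π. The set Γ(I,J,K) := Φ_I ∪ (Φ_J⁺ \ Φ_K) is a closed subset of Φ if and only if there exist subsets X, Y ⊆ J such that: (1) I ∪ K = X ∪ Y and X ∩ Y = ∅; (2) X and Y are orthogonal; (3) X ⊇ I \ K and Y ⊇ K \ I. -/
variable {V : Type*} [NormedAddCommGroup V] [InnerProductSpace ℝ V]

/-- `Φ` is a finite reduced crystallographic root system spanning `V`. -/
structure IsRootSystem (Φ : Set V) : Prop where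
  finite : Φ.Finite
  zero_not_mem : (0 : V) ∉ Φ
  span_top : Submodule.span ℝ Φ = ⊤
  reduced : ∀ α ∈ Φ, ∀ c : ℝ, c • α ∈ Φ → c = 1 ∨ c = -1
  crystallographic : ∀ α ∈ Φ, ∀ β ∈ Φ,
    ∃ n : ℤ, 2 * (inner ℝ β α : ℝ) / (inner ℝ α α : ℝ) = (n : ℝ)
  reflect_mem : ∀ α ∈ Φ, ∀ β ∈ Φ,
    β - (2 * (inner ℝ β α : ℝ) / (inner ℝ α α : ℝ)) • α ∈ Φ

/-- `α` is a nonnegative linear combination of elements of `Δ`. -/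
def IsNonnegComb (Δ : Set V) (α : V) : Prop :=
  ∃ c : V →₀ ℝ, (c.support : Set V) ⊆ Δ ∧ (∀ v, 0 ≤ c v) ∧ α = c.sum fun v r => r • v

/-- `Δ` is a base (set of simple roots) of the root system `Φ`. -/
structure IsBase (Φ Δ : Set V) : Prop where
  subset : Δ ⊆ Φ
  indep : LinearIndependent ℝ (Subtype.val : Δ → V)
  pos_or_neg : ∀ α ∈ Φ, IsNonnegComb Δ α ∨ IsNonnegComb Δ (-α)

/-- The set of positive roots with respect to the base `Δ`. -/
def posRoots (Φ Δ : Set V) : Set V := {α ∈ Φ | IsNonnegComb Δ α}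

/-- The set of negative roots with respect to the base `Δ`. -/
def negRoots (Φ Δ : Set V) : Set V := {α ∈ Φ | IsNonnegComb Δ (-α)}

/-- `Φ_A := Φ ∩ span A`. -/
def rootsIn (Φ A : Set V) : Set V := Φ ∩ (Submodule.span ℝ A : Set V)

/-- `Φ_A⁺`. -/
def posRootsIn (Φ Δ A : Set V) : Set V := rootsIn Φ A ∩ posRoots Φ Δ

/-- `Φ_A⁻`. -/
def negRootsIn (Φ Δ A : Set V) : Set V := rootsIn Φ A ∩ negRoots Φ Δ

/-- `Γ` is a closed subset of `Φ`. -/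
def IsClosedSubset (Φ Γ : Set V) : Prop := ∀ α ∈ Γ, ∀ β ∈ Γ, α + β ∈ Φ → α + β ∈ Γ

/-- `X` and `Y` are orthogonal sets of vectors. -/
def OrthogonalSets (X Y : Set V) : Prop := ∀ α ∈ X, ∀ β ∈ Y, (inner ℝ α β : ℝ) = 0




open Submodule Finsupp

set_option linter.unusedSectionVars false


/-- The weighted sum of a finitely supported coefficient function. -/
noncomputable def fsum (c : V →₀ ℝ) : V := c.sum fun v r => r • v

lemma fsum_def (c : V →₀ ℝ) : fsum c = c.sum fun v r => r • v := rfl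

lemma fsum_eq_lc (c : V →₀ ℝ) : fsum c = Finsupp.linearCombination ℝ id c := rfl

lemma fsum_add (c d : V →₀ ℝ) : fsum (c + d) = fsum c + fsum d := by
  simp [fsum_eq_lc]

lemma fsum_sub (c d : V →₀ ℝ) : fsum (c - d) = fsum c - fsum d := by
  simp [fsum_eq_lc]

lemma fsum_single (v : V) (r : ℝ) : fsum (Finsupp.single v r) = r • v := by
  simp [fsum_eq_lc]

lemma fsum_neg (c : V →₀ ℝ) : fsum (-c) = -fsum c := by
  simp [fsum_eq_lc]

lemma fsum_mem_span {c : V →₀ ℝ} {S : Set V} (h : ↑c.support ⊆ S) :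
    fsum c ∈ span ℝ S :=
  mem_span_set.mpr ⟨c, h, rfl⟩

lemma exists_rep_of_mem_span {S : Set V} {x : V} (h : x ∈ span ℝ S) :
    ∃ c : V →₀ ℝ, ↑c.support ⊆ S ∧ x = fsum c := by
  obtain ⟨c, hc, hx⟩ := mem_span_set.mp h
  exact ⟨c, hc, hx.symm⟩

lemma fsum_uniq {Δ : Set V} (hind : LinearIndependent ℝ (Subtype.val : Δ → V))
    {c d : V →₀ ℝ} (hc : ↑c.support ⊆ Δ) (hd : ↑d.support ⊆ Δ)
    (h : fsum c = fsum d) : c = d := by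
  have h1 : (LinearIndependent ℝ fun (x : ↥Δ) => (x : V)) := hind
  rw [linearIndependent_subtype_iff, linearIndepOn_iff] at h1
  have hsupp : c - d ∈ Finsupp.supported ℝ ℝ Δ := by
    rw [Finsupp.mem_supported]
    refine Set.Subset.trans ?_ (Set.union_subset hc hd)
    intro x hx
    classical
    have hx2 : x ∈ c.support ∪ d.support := Finsupp.support_sub (f := c) (g := d) hx
    simpa using hx2
  have := h1 (c - d) hsupp (by
    rw [← fsum_eq_lc, fsum_sub, h, sub_self])
  exact sub_eq_zero.mp this

/-- Height of a coefficient function. -/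
noncomputable def ht (c : V →₀ ℝ) : ℝ := c.sum fun _ r => r

lemma ht_sub (c d : V →₀ ℝ) : ht (c - d) = ht c - ht d :=
  Finsupp.sum_sub_index (fun _ _ _ => rfl)

lemma ht_add (c d : V →₀ ℝ) : ht (c + d) = ht c + ht d :=
  Finsupp.sum_add_index' (fun _ => rfl) (fun _ _ _ => rfl)

lemma ht_single (v : V) (r : ℝ) : ht (Finsupp.single v r) = r := by
  simp [ht]

lemma ht_nonneg {c : V →₀ ℝ} (h : ∀ v, 0 ≤ c v) : 0 ≤ ht c :=
  Finset.sum_nonneg fun v _ => h v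

lemma eq_zero_of_ht_nonpos {c : V →₀ ℝ} (h : ∀ v, 0 ≤ c v) (h0 : ht c ≤ 0) :
    c = 0 := by
  by_contra hc
  obtain ⟨v, hv⟩ := Finsupp.ne_iff.mp hc
  have hv' : v ∈ c.support := by simpa using hv
  have : c v ≤ ht c := Finset.single_le_sum (fun i _ => h i) hv'
  have : (0 : ℝ) < c v := lt_of_le_of_ne (h v) (Ne.symm (by simpa using hv))
  linarith [Finset.single_le_sum (fun i (_ : i ∈ c.support) => h i) hv']


variable {Φ Δ : Set V}

lemma inner_self_pos' (hΦ : IsRootSystem Φ) {α : V} (hα : α ∈ Φ) :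
    0 < (inner ℝ α α : ℝ) := by
  have hne : α ≠ 0 := fun h => hΦ.zero_not_mem (h ▸ hα)
  have h0 : (inner ℝ α α : ℝ) ≠ 0 := fun h => hne (inner_self_eq_zero.mp h)
  exact lt_of_le_of_ne real_inner_self_nonneg (Ne.symm h0)

lemma neg_mem (hΦ : IsRootSystem Φ) {α : V} (hα : α ∈ Φ) : -α ∈ Φ := by
  have h := hΦ.reflect_mem α hα α hα
  have ha : (inner ℝ α α : ℝ) ≠ 0 := ne_of_gt (inner_self_pos' hΦ hα)
  rw [show 2 * (inner ℝ α α : ℝ) / (inner ℝ α α : ℝ) = 2 by field_simp] at h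
  rw [show α - (2:ℝ) • α = -α by rw [two_smul]; abel] at h
  exact h

lemma add_mem_of_inner_lt (hΦ : IsRootSystem Φ) {α β : V} (hα : α ∈ Φ) (hβ : β ∈ Φ)
    (hne : α ≠ -β) (hlt : (inner ℝ α β : ℝ) < 0) : α + β ∈ Φ := by
  have ha : (0:ℝ) < inner ℝ α α := inner_self_pos' hΦ hα
  have hb : (0:ℝ) < inner ℝ β β := inner_self_pos' hΦ hβ
  have hα0 : α ≠ 0 := fun h => hΦ.zero_not_mem (h ▸ hα)
  have hdep : ∀ c : ℝ, β ≠ c • α := by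
    intro c hc
    rcases hΦ.reduced α hα c (hc ▸ hβ) with h1 | h1
    · rw [h1, one_smul] at hc
      rw [hc] at hlt; linarith
    · rw [h1, neg_one_smul] at hc
      exact hne (by rw [hc, neg_neg])
  -- strict Cauchy-Schwarz
  have hcs : (inner ℝ α β : ℝ) * inner ℝ α β < inner ℝ α α * inner ℝ β β := by
    have hnorm : ‖α‖ ≠ 0 := norm_ne_zero_iff.mpr hα0
    have hkey : (inner ℝ α (-β) : ℝ) < ‖α‖ * ‖-β‖ := by
      apply inner_lt_norm_mul_iff_real.mpr
      intro hcontra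
      apply hdep (-(‖β‖ / ‖α‖))
      have h1 : ‖β‖ • α = -(‖α‖ • β) := by simpa using hcontra
      have h2 : ‖α‖ • β = ‖α‖ • ((-(‖β‖ / ‖α‖)) • α) := by
        rw [smul_smul, show ‖α‖ * (-(‖β‖ / ‖α‖)) = -‖β‖ by field_simp, neg_smul, h1,
          neg_neg]
      exact smul_right_injective V hnorm h2
    have hkey2 : -(inner ℝ α β : ℝ) < ‖α‖ * ‖β‖ := by
      rwa [inner_neg_right, norm_neg] at hkey
    have hsq : (inner ℝ α β : ℝ) ^ 2 < (‖α‖ * ‖β‖) ^ 2 := by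
      apply sq_lt_sq'
      · linarith
      · have : (0:ℝ) ≤ ‖α‖ * ‖β‖ := mul_nonneg (norm_nonneg _) (norm_nonneg _)
        linarith
    have hab : (‖α‖ * ‖β‖) ^ 2 = (inner ℝ α α : ℝ) * inner ℝ β β := by
      rw [real_inner_self_eq_norm_mul_norm, real_inner_self_eq_norm_mul_norm]; ring
    nlinarith [hsq, hab]
  obtain ⟨m, hm⟩ := hΦ.crystallographic α hα β hβ
  obtain ⟨n, hn⟩ := hΦ.crystallographic β hβ α hα
  have hba : (inner ℝ β α : ℝ) = inner ℝ α β := real_inner_comm α β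
  have hm_neg : (m : ℝ) < 0 := by
    rw [← hm, hba]; exact div_neg_of_neg_of_pos (by linarith) ha
  have hn_neg : (n : ℝ) < 0 := by
    rw [← hn]; exact div_neg_of_neg_of_pos (by linarith) hb
  have hprod : (m : ℝ) * n < 4 := by
    rw [← hm, ← hn, hba]
    rw [div_mul_div_comm]
    rw [div_lt_iff₀ (by positivity)]
    nlinarith [hcs]
  have hm1 : m ≤ -1 := by
    have : m < 0 := by exact_mod_cast hm_neg
    omega
  have hn1 : n ≤ -1 := by
    have : n < 0 := by exact_mod_cast hn_neg
    omega
  have hmn : m * n < 4 := by exact_mod_cast hprod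
  have hcase : m = -1 ∨ n = -1 := by
    by_contra hc
    push_neg at hc
    have hm2 : m ≤ -2 := by omega
    have hn2 : n ≤ -2 := by omega
    nlinarith
  rcases hcase with hc | hc
  · have h := hΦ.reflect_mem α hα β hβ
    rw [hm, hc] at h
    simpa [add_comm] using h
  · have h := hΦ.reflect_mem β hβ α hα
    rw [hn, hc] at h
    simpa using h

lemma fsum_zero' : fsum (0 : V →₀ ℝ) = 0 := by simp [fsum]

lemma not_pos_and_neg (hΦ : IsRootSystem Φ) (hΔ : IsBase Φ Δ) {α : V} (hα : α ∈ Φ) :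
    ¬(IsNonnegComb Δ α ∧ IsNonnegComb Δ (-α)) := by
  rintro ⟨⟨c, hc, hcnn, hcs⟩, ⟨d, hd, hdnn, hds⟩⟩
  rw [← fsum_def] at hcs hds
  have hsum : fsum (c + d) = fsum (0 : V →₀ ℝ) := by
    rw [fsum_add, fsum_zero', ← hcs, ← hds]; abel
  have hcd : c + d = 0 := by
    classical
    refine fsum_uniq hΔ.indep ?_ (by simp) hsum
    refine Set.Subset.trans ?_ (Set.union_subset hc hd)
    intro x hx
    have := Finsupp.support_add (g₁ := c) (g₂ := d) hx
    simpa using this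
  have hc0 : c = 0 := by
    ext v
    have h1 : c v + d v = 0 := by
      have := DFunLike.congr_fun hcd v
      simpa using this
    have := hcnn v; have := hdnn v
    simp only [Finsupp.coe_zero, Pi.zero_apply]
    linarith
  rw [hc0, fsum_zero'] at hcs
  exact hΦ.zero_not_mem (hcs ▸ hα)

lemma rep_supp_subset (hΔ : IsBase Φ Δ) {S : Set V} (hS : S ⊆ Δ) {c : V →₀ ℝ}
    (hc : ↑c.support ⊆ Δ) (hx : fsum c ∈ span ℝ S) : ↑c.support ⊆ S := by
  obtain ⟨d, hd, hds⟩ := exists_rep_of_mem_span hx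
  have : c = d := fsum_uniq hΔ.indep hc (hd.trans hS) hds
  rw [this]; exact hd

lemma supp_single_one (δ : V) : ((Finsupp.single δ (1:ℝ)).support : Set V) = {δ} := by
  classical
  rw [Finsupp.support_single_ne_zero δ (one_ne_zero)]
  simp

lemma simple_mem_of_mem_span (hΔ : IsBase Φ Δ) {S : Set V} (hS : S ⊆ Δ) {δ : V}
    (hδ : δ ∈ Δ) (h : δ ∈ span ℝ S) : δ ∈ S := by
  have hrep : δ = fsum (Finsupp.single δ (1:ℝ)) := by rw [fsum_single, one_smul]
  have := rep_supp_subset hΔ hS (c := Finsupp.single δ 1)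
    (by rw [supp_single_one]; exact Set.singleton_subset_iff.mpr hδ) (by rw [← hrep]; exact h)
  rw [supp_single_one] at this
  exact this rfl

lemma single_nonneg' (δ : V) : ∀ v, 0 ≤ (Finsupp.single δ (1:ℝ)) v := by
  intro v
  classical
  rw [Finsupp.single_apply]
  split <;> norm_num

lemma simple_pos (hδ : δ ∈ Δ) : IsNonnegComb Δ δ :=
  ⟨Finsupp.single δ 1, by rw [supp_single_one]; exact Set.singleton_subset_iff.mpr hδ,
    single_nonneg' δ, by rw [← fsum_def, fsum_single, one_smul]⟩

lemma inner_simple_nonpos (hΦ : IsRootSystem Φ) (hΔ : IsBase Φ Δ) {δ ε : V}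
    (hδ : δ ∈ Δ) (hε : ε ∈ Δ) (hne : δ ≠ ε) : (inner ℝ δ ε : ℝ) ≤ 0 := by
  by_contra hpos
  push_neg at hpos
  have hδΦ := hΔ.subset hδ
  have hεΦ := hΔ.subset hε
  have hmem : δ + -ε ∈ Φ := by
    apply add_mem_of_inner_lt hΦ hδΦ (neg_mem hΦ hεΦ) (by rwa [neg_neg])
    rw [inner_neg_right]; linarith
  rw [← sub_eq_add_neg] at hmem
  have hrep : δ - ε = fsum (Finsupp.single δ 1 - Finsupp.single ε 1) := by
    rw [fsum_sub, fsum_single, fsum_single, one_smul, one_smul]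
  have hsupp : ↑(Finsupp.single δ (1:ℝ) - Finsupp.single ε 1).support ⊆ Δ := by
    classical
    intro x hx
    have hx2 := Finsupp.support_sub (f := Finsupp.single δ (1:ℝ)) (g := Finsupp.single ε 1) hx
    simp only [Finset.mem_union] at hx2
    rcases hx2 with h | h
    · have : x = δ := by simpa using (Finsupp.mem_support_single _ _ _).mp h |>.1
      exact this ▸ hδ
    · have : x = ε := by simpa using (Finsupp.mem_support_single _ _ _).mp h |>.1
      exact this ▸ hε
  rcases hΔ.pos_or_neg _ hmem with ⟨d, hd, hdnn, hds⟩ | ⟨d, hd, hdnn, hds⟩ <;>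
    rw [← fsum_def] at hds
  · have heq : Finsupp.single δ 1 - Finsupp.single ε 1 = d :=
      fsum_uniq hΔ.indep hsupp hd (by rw [← hrep, hds])
    have := hdnn ε
    rw [← heq] at this
    classical
    simp [Finsupp.single_apply, hne, Ne.symm hne] at this
    linarith
  · have heq : Finsupp.single ε 1 - Finsupp.single δ 1 = d := by
      apply fsum_uniq hΔ.indep ?_ hd
      · rw [fsum_sub, fsum_single, fsum_single, one_smul, one_smul, ← neg_sub, ← hds]
      · classical
        intro x hx
        have hx2 := Finsupp.support_sub (f := Finsupp.single ε (1:ℝ)) (g := Finsupp.single δ 1) hx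
        simp only [Finset.mem_union] at hx2
        rcases hx2 with h | h
        · have : x = ε := by simpa using (Finsupp.mem_support_single _ _ _).mp h |>.1
          exact this ▸ hε
        · have : x = δ := by simpa using (Finsupp.mem_support_single _ _ _).mp h |>.1
          exact this ▸ hδ
    have := hdnn δ
    rw [← heq] at this
    classical
    simp [Finsupp.single_apply, hne, Ne.symm hne] at this
    linarith

lemma nonneg_add {α β : V} (ha : IsNonnegComb Δ α) (hb : IsNonnegComb Δ β) :
    IsNonnegComb Δ (α + β) := by
  obtain ⟨c, hc, hcnn, hcs⟩ := ha
  obtain ⟨d, hd, hdnn, hds⟩ := hb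
  refine ⟨c + d, ?_, fun v => by simpa using add_nonneg (hcnn v) (hdnn v), ?_⟩
  · classical
    intro x hx
    have := Finsupp.support_add (g₁ := c) (g₂ := d) hx
    simp only [Finset.mem_union] at this
    rcases this with h | h
    · exact hc h
    · exact hd h
  · show α + β = fsum (c + d)
    rw [fsum_add, ← fsum_def] at *
    rw [hcs, hds]

lemma inner_fsum (γ : V) (c : V →₀ ℝ) :
    (inner ℝ γ (fsum c) : ℝ) = ∑ v ∈ c.support, c v * (inner ℝ γ v : ℝ) := by
  rw [fsum_def, Finsupp.sum, inner_sum]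
  exact Finset.sum_congr rfl fun v _ => real_inner_smul_right γ v (c v)

lemma exists_inner_pos (hΦ : IsRootSystem Φ) {γ : V} (hγ : γ ∈ Φ) {c : V →₀ ℝ}
    (hrep : γ = fsum c) (hnn : ∀ v, 0 ≤ c v) :
    ∃ δ ∈ c.support, 0 < (inner ℝ γ δ : ℝ) := by
  have hpos : 0 < (inner ℝ γ γ : ℝ) := inner_self_pos' hΦ hγ
  by_contra hcon
  push_neg at hcon
  have : (inner ℝ γ γ : ℝ) ≤ 0 := by
    nth_rewrite 2 [hrep]
    rw [inner_fsum]
    apply Finset.sum_nonpos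
    intro v hv
    have h1 := hnn v
    have h2 := hcon v hv
    nlinarith
  linarith

lemma sub_simple_mem (hΦ : IsRootSystem Φ) (hΔ : IsBase Φ Δ) {γ δ : V} (hγ : γ ∈ Φ)
    (hδ : δ ∈ Δ) (hpos : 0 < (inner ℝ γ δ : ℝ)) (hne : γ ≠ δ) : γ - δ ∈ Φ := by
  have h := add_mem_of_inner_lt hΦ hγ (neg_mem hΦ (hΔ.subset hδ)) (by rwa [neg_neg])
    (by rw [inner_neg_right]; linarith)
  rwa [← sub_eq_add_neg] at h

lemma supp_sub_single_subset {c : V →₀ ℝ} {δ : V} :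
    ↑(c - Finsupp.single δ (1:ℝ)).support ⊆ (↑c.support ∪ {δ} : Set V) := by
  classical
  intro x hx
  have hx2 := Finsupp.support_sub (f := c) (g := Finsupp.single δ (1:ℝ)) hx
  simp only [Finset.mem_union] at hx2
  rcases hx2 with h | h
  · exact Set.mem_union_left _ h
  · right
    simpa using (Finsupp.mem_support_single _ _ _).mp h |>.1

lemma sub_simple_pos (hΦ : IsRootSystem Φ) (hΔ : IsBase Φ Δ) {γ δ : V} {c : V →₀ ℝ}
    (hγ : γ ∈ Φ) (hrep : γ = fsum c) (hnn : ∀ v, 0 ≤ c v) (hsupp : ↑c.support ⊆ Δ)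
    (hδ : δ ∈ c.support) (hne : γ ≠ δ) (hmem : γ - δ ∈ Φ) :
    ∀ v, 0 ≤ (c - Finsupp.single δ (1:ℝ)) v := by
  classical
  have hδΔ : δ ∈ Δ := hsupp hδ
  have hsupp' : ↑(c - Finsupp.single δ (1:ℝ)).support ⊆ Δ :=
    Set.Subset.trans supp_sub_single_subset
      (Set.union_subset hsupp (Set.singleton_subset_iff.mpr hδΔ))
  have hrep' : γ - δ = fsum (c - Finsupp.single δ 1) := by
    rw [fsum_sub, fsum_single, one_smul, ← hrep]
  rcases hΔ.pos_or_neg _ hmem with ⟨d, hd, hdnn, hds⟩ | ⟨d, hd, hdnn, hds⟩ <;>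
    rw [← fsum_def] at hds
  · have heq : c - Finsupp.single δ 1 = d :=
      fsum_uniq hΔ.indep hsupp' hd (by rw [← hrep', hds])
    rw [heq]; exact hdnn
  · exfalso
    have heq : c - Finsupp.single δ 1 = -d := by
      apply fsum_uniq hΔ.indep hsupp' (by intro x hx; exact hd (by simpa using hx))
      rw [fsum_neg, ← hds, ← hrep', neg_neg]
    have hle : ∀ v, v ≠ δ → c v = 0 := by
      intro v hv
      have h1 := DFunLike.congr_fun heq v
      simp only [Finsupp.sub_apply, Finsupp.single_apply, if_neg (Ne.symm hv),
        Finsupp.coe_neg, Pi.neg_apply, sub_zero] at h1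
      have := hdnn v
      have := hnn v
      linarith
    have hcs : c = Finsupp.single δ (c δ) := by
      ext v
      by_cases hv : v = δ
      · subst hv; simp [Finsupp.single_apply]
      · rw [hle v hv, Finsupp.single_apply, if_neg (Ne.symm hv)]
    have hγδ : γ = c δ • δ := by
      rw [hrep, hcs, fsum_single]
      simp [Finsupp.single_eq_same]
    rcases hΦ.reduced δ (hΔ.subset hδΔ) (c δ) (hγδ ▸ hγ) with h1 | h1
    · exact hne (by rw [hγδ, h1, one_smul])
    · have := hnn δ
      rw [h1] at this
      linarith

lemma inner_eq_zero_of_mem_span {δ : V} {Y : Set V} (h : ∀ y ∈ Y, (inner ℝ δ y : ℝ) = 0)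
    {w : V} (hw : w ∈ span ℝ Y) : (inner ℝ δ w : ℝ) = 0 := by
  induction hw using Submodule.span_induction with
  | mem x hx => exact h x hx
  | zero => exact inner_zero_right δ
  | add x y hx hy ihx ihy => rw [inner_add_right, ihx, ihy, add_zero]
  | smul a x hx ihx => rw [real_inner_smul_right, ihx, mul_zero]

lemma spanSplitAux (hΦ : IsRootSystem Φ) (hΔ : IsBase Φ Δ) :
    ∀ n : ℕ, ∀ X Y : Set V, X ⊆ Δ → Y ⊆ Δ → OrthogonalSets X Y →
    ∀ γ ∈ Φ, ∀ c : V →₀ ℝ, γ = fsum c → (∀ v, 0 ≤ c v) → ↑c.support ⊆ X ∪ Y →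
    ht c ≤ (n : ℝ) → γ ∈ span ℝ X ∨ γ ∈ span ℝ Y := by
  intro n
  induction n with
  | zero =>
    intro X Y _ _ _ γ hγ c hrep hnn _ hht
    exfalso
    have : c = 0 := eq_zero_of_ht_nonpos hnn (by exact_mod_cast hht)
    rw [this, fsum_zero'] at hrep
    exact hΦ.zero_not_mem (hrep ▸ hγ)
  | succ n IH =>
    intro X Y hX hY hXY γ hγ c hrep hnn hsupp hht
    obtain ⟨δ, hδsupp, hδpos⟩ := exists_inner_pos hΦ hγ hrep hnn
    have step : ∀ X Y : Set V, X ⊆ Δ → Y ⊆ Δ → OrthogonalSets X Y →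
        ↑c.support ⊆ X ∪ Y → δ ∈ X → γ ∈ span ℝ X ∨ γ ∈ span ℝ Y := by
      clear hX hY hXY hsupp X Y
      intro X Y hX hY hXY hsupp hδX
      by_cases hγδ : γ = δ
      · exact Or.inl (hγδ ▸ subset_span hδX)
      have hδΔ : δ ∈ Δ := hX hδX
      have hcΔ : ↑c.support ⊆ Δ := Set.Subset.trans hsupp (Set.union_subset hX hY)
      have hmem : γ - δ ∈ Φ := sub_simple_mem hΦ hΔ hγ hδΔ hδpos hγδ
      set c' := c - Finsupp.single δ (1:ℝ) with hc'
      have hnn' : ∀ v, 0 ≤ c' v := sub_simple_pos hΦ hΔ hγ hrep hnn hcΔ hδsupp hγδ hmem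
      have hrep' : γ - δ = fsum c' := by rw [hc', fsum_sub, fsum_single, one_smul, ← hrep]
      have hsupp' : ↑c'.support ⊆ X ∪ Y :=
        Set.Subset.trans supp_sub_single_subset
          (Set.union_subset hsupp (Set.singleton_subset_iff.mpr (Set.mem_union_left _ hδX)))
      have hht' : ht c' ≤ (n : ℝ) := by
        rw [hc', ht_sub, ht_single]
        push_cast at hht
        linarith
      rcases IH X Y hX hY hXY (γ - δ) hmem c' hrep' hnn' hsupp' hht' with h | h
      · left
        have := Submodule.add_mem _ h (subset_span hδX)
        rwa [sub_add_cancel] at this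
      · -- γ - δ ∈ span Y : contradiction
        exfalso
        have hδY : δ ∉ Y := by
          intro hδY
          have := hXY δ hδX δ hδY
          have hδδ : (0:ℝ) < inner ℝ δ δ := inner_self_pos' hΦ (hΔ.subset hδΔ)
          linarith
        have hsuppY : ↑c'.support ⊆ Y := rep_supp_subset hΔ hY
          (Set.Subset.trans hsupp' (Set.union_subset hX hY)) (by rw [← hrep']; exact h)
        have hδv : (inner ℝ γ δ : ℝ) = inner ℝ δ δ := by
          have h1 : (inner ℝ δ (γ - δ) : ℝ) = 0 :=
            inner_eq_zero_of_mem_span (fun y hy => hXY δ hδX y hy) h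
          have h2 : (inner ℝ (γ - δ) δ : ℝ) = 0 := by rw [real_inner_comm]; exact h1
          rw [inner_sub_left] at h2
          linarith
        have hδδpos : (0:ℝ) < inner ℝ δ δ := inner_self_pos' hΦ (hΔ.subset hδΔ)
        have hrefl := hΦ.reflect_mem δ (hΔ.subset hδΔ) γ hγ
        rw [show 2 * (inner ℝ γ δ : ℝ) / (inner ℝ δ δ : ℝ) = 2 by
          rw [hδv]; field_simp] at hrefl
        have hvd : γ - (2:ℝ) • δ = (γ - δ) - δ := by rw [two_smul]; abel
        rw [hvd] at hrefl
        -- (γ - δ) - δ ∈ Φ, rep c' - single δ 1, but supp c' ⊆ Y, δ ∉ Y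
        have hc'δ : c' δ = 0 := by
          by_contra h0
          exact hδY (hsuppY (Finsupp.mem_support_iff.mpr h0))
        have hrep'' : (γ - δ) - δ = fsum (c' - Finsupp.single δ 1) := by
          rw [fsum_sub, fsum_single, one_smul, ← hrep']
        have hsupp'' : ↑(c' - Finsupp.single δ (1:ℝ)).support ⊆ Δ :=
          Set.Subset.trans supp_sub_single_subset
            (Set.union_subset (Set.Subset.trans hsuppY hY) (Set.singleton_subset_iff.mpr hδΔ))
        rcases hΔ.pos_or_neg _ hrefl with ⟨d, hd, hdnn, hds⟩ | ⟨d, hd, hdnn, hds⟩ <;>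
          rw [← fsum_def] at hds
        · have heq : c' - Finsupp.single δ 1 = d :=
            fsum_uniq hΔ.indep hsupp'' hd (by rw [← hrep'', hds])
          have := hdnn δ
          rw [← heq] at this
          simp only [Finsupp.sub_apply, hc'δ, Finsupp.single_eq_same] at this
          linarith
        · have heq : c' - Finsupp.single δ 1 = -d := by
            apply fsum_uniq hΔ.indep hsupp'' (by intro x hx; exact hd (by simpa using hx))
            rw [fsum_neg, ← hds, ← hrep'', neg_neg]
          -- all coords of c' vanish except δ, and c' δ = 0, so c' = 0, so γ - δ = 0 ∈ Φ
          have hc0 : c' = 0 := by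
            ext w
            by_cases hw : w = δ
            · rw [hw, hc'δ]; rfl
            · have h1 := DFunLike.congr_fun heq w
              have h2 : (Finsupp.single δ (1:ℝ)) w = 0 :=
                Finsupp.single_eq_of_ne' (fun hh => hw hh.symm)
              simp only [Finsupp.sub_apply, h2, Finsupp.coe_neg, Pi.neg_apply, sub_zero] at h1
              have := hdnn w
              have := hnn' w
              simp only [Finsupp.coe_zero, Pi.zero_apply]
              linarith
          rw [hc0, fsum_zero'] at hrep'
          exact hΦ.zero_not_mem (hrep' ▸ hmem)
    rcases hsupp hδsupp with hδX | hδY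
    · exact step X Y hX hY hXY hsupp hδX
    · have := step Y X hY hX (fun a ha b hb => by rw [real_inner_comm]; exact hXY b hb a ha)
        (by rwa [Set.union_comm]) hδY
      exact this.symm

lemma spanSplit (hΦ : IsRootSystem Φ) (hΔ : IsBase Φ Δ) {X Y : Set V}
    (hX : X ⊆ Δ) (hY : Y ⊆ Δ) (hXY : OrthogonalSets X Y) {γ : V} (hγ : γ ∈ Φ)
    (hspan : γ ∈ span ℝ (X ∪ Y)) : γ ∈ span ℝ X ∨ γ ∈ span ℝ Y := by
  have main : ∀ γ' ∈ Φ, IsNonnegComb Δ γ' → γ' ∈ span ℝ (X ∪ Y) →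
      γ' ∈ span ℝ X ∨ γ' ∈ span ℝ Y := by
    intro γ' hγ' ⟨c, hc, hcnn, hcs⟩ hspan'
    rw [← fsum_def] at hcs
    have hsupp : ↑c.support ⊆ X ∪ Y :=
      rep_supp_subset hΔ (Set.union_subset hX hY) hc (by rw [← hcs]; exact hspan')
    obtain ⟨n, hn⟩ := exists_nat_ge (ht c)
    exact spanSplitAux hΦ hΔ n X Y hX hY hXY γ' hγ' c hcs hcnn hsupp hn
  rcases hΔ.pos_or_neg γ hγ with hpos | hneg
  · exact main γ hγ hpos hspan
  · have hneg' : -γ ∈ Φ := neg_mem hΦ hγ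
    have h2 : IsNonnegComb Δ (-γ) := hneg
    have h3 : -γ ∈ span ℝ (X ∪ Y) := Submodule.neg_mem _ hspan
    rcases main (-γ) hneg' h2 h3 with h | h
    · exact Or.inl (by simpa using Submodule.neg_mem _ h)
    · exact Or.inr (by simpa using Submodule.neg_mem _ h)

lemma neg_simple_rootsIn (hΦ : IsRootSystem Φ) (hΔ : IsBase Φ Δ) {I : Set V} (hIΔ : I ⊆ Δ)
    {δ : V} (hδ : δ ∈ I) : -δ ∈ rootsIn Φ I :=
  ⟨neg_mem hΦ (hΔ.subset (hIΔ hδ)), Submodule.neg_mem _ (subset_span hδ)⟩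

lemma b_not_mem_Gamma (hΦ : IsRootSystem Φ) (hΔ : IsBase Φ Δ) {I J K : Set V}
    (hIΔ : I ⊆ Δ) (hKΔ : K ⊆ Δ) {b : V} (hbK : b ∈ K) (hbI : b ∉ I) :
    b ∉ rootsIn Φ I ∪ (posRootsIn Φ Δ J \ rootsIn Φ K) := by
  rintro (⟨_, hspan⟩ | ⟨_, hnK⟩)
  · exact hbI (simple_mem_of_mem_span hΔ hIΔ (hKΔ hbK) hspan)
  · exact hnK ⟨hΔ.subset (hKΔ hbK), subset_span hbK⟩

lemma lemD (hΦ : IsRootSystem Φ) (hΔ : IsBase Φ Δ) {I J K : Set V}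
    (hJΔ : J ⊆ Δ) (hIJ : I ⊆ J) (hKJ : K ⊆ J)
    (hcl : IsClosedSubset Φ (rootsIn Φ I ∪ (posRootsIn Φ Δ J \ rootsIn Φ K)))
    {b : V} (hbK : b ∈ K) (hbI : b ∉ I) :
    ∀ n : ℕ, ∀ γ ∈ Φ, ∀ c : V →₀ ℝ, γ = fsum c → (∀ v, 0 ≤ c v) →
    ↑c.support ⊆ I ∪ {b} → c b = 1 →
    γ ∈ rootsIn Φ I ∪ (posRootsIn Φ Δ J \ rootsIn Φ K) → ht c ≤ (n : ℝ) → False := by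
  have hIΔ : I ⊆ Δ := Set.Subset.trans hIJ hJΔ
  have hKΔ : K ⊆ Δ := Set.Subset.trans hKJ hJΔ
  have hbΔ : b ∈ Δ := hKΔ hbK
  have hbΓ := b_not_mem_Gamma hΦ hΔ (J := J) hIΔ hKΔ hbK hbI
  intro n
  induction n with
  | zero =>
    intro γ hγ c hrep hnn hsupp hcb hγΓ hht
    have : c = 0 := eq_zero_of_ht_nonpos hnn (by exact_mod_cast hht)
    rw [this] at hcb
    simpa using hcb
  | succ n IH =>
    intro γ hγ c hrep hnn hsupp hcb hγΓ hht
    have hcΔ : ↑c.support ⊆ Δ := Set.Subset.trans hsupp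
      (Set.union_subset hIΔ (Set.singleton_subset_iff.mpr hbΔ))
    by_cases hγb : γ = b
    · exact hbΓ (hγb ▸ hγΓ)
    by_cases hex : ∃ δ ∈ c.support, δ ≠ b ∧ 0 < (inner ℝ γ δ : ℝ)
    · obtain ⟨δ, hδsupp, hδb, hδpos⟩ := hex
      have hδI : δ ∈ I := by
        rcases hsupp hδsupp with h | h
        · exact h
        · exact absurd h hδb
      have hγδ : γ ≠ δ := by
        intro h
        have hrep2 : fsum c = fsum (Finsupp.single δ (1:ℝ)) := by
          rw [← hrep, fsum_single, one_smul, h]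
        have := fsum_uniq hΔ.indep hcΔ
          (by rw [supp_single_one]; exact Set.singleton_subset_iff.mpr (hIΔ hδI)) hrep2
        rw [this, Finsupp.single_eq_of_ne' hδb] at hcb
        simpa using hcb
      have hmem : γ - δ ∈ Φ := sub_simple_mem hΦ hΔ hγ (hIΔ hδI) hδpos hγδ
      have hnn' := sub_simple_pos hΦ hΔ hγ hrep hnn hcΔ hδsupp hγδ hmem
      have hΓ' : γ - δ ∈ rootsIn Φ I ∪ (posRootsIn Φ Δ J \ rootsIn Φ K) := by
        have h := hcl γ hγΓ (-δ) (Or.inl (neg_simple_rootsIn hΦ hΔ hIΔ hδI))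
          (by rwa [← sub_eq_add_neg])
        rwa [← sub_eq_add_neg] at h
      refine IH (γ - δ) hmem (c - Finsupp.single δ 1) ?_ hnn' ?_ ?_ hΓ' ?_
      · rw [fsum_sub, fsum_single, one_smul, ← hrep]
      · exact Set.Subset.trans supp_sub_single_subset
          (Set.union_subset hsupp (Set.singleton_subset_iff.mpr (Or.inl hδI)))
      · rw [Finsupp.sub_apply, Finsupp.single_eq_of_ne' hδb, sub_zero, hcb]
      · rw [ht_sub, ht_single]
        push_cast at hht ⊢
        linarith
    · push_neg at hex
      obtain ⟨δ, hδsupp, hδpos⟩ := exists_inner_pos hΦ hγ hrep hnn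
      have hδb : δ = b := by
        by_contra h
        exact absurd hδpos (not_lt.mpr (hex δ hδsupp h))
      subst hδb
      have hmem : γ - δ ∈ Φ := sub_simple_mem hΦ hΔ hγ hbΔ hδpos hγb
      have hsuppI : ↑(c - Finsupp.single δ (1:ℝ)).support ⊆ I := by
        intro x hx
        have hx0 : (c - Finsupp.single δ (1:ℝ)) x ≠ 0 := Finsupp.mem_support_iff.mp hx
        have hxδ : x ≠ δ := by
          intro h
          subst h
          rw [Finsupp.sub_apply, hcb, Finsupp.single_eq_same] at hx0
          simpa using hx0
        rcases supp_sub_single_subset hx with h | h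
        · rcases hsupp h with h2 | h2
          · exact h2
          · exact absurd h2 hxδ
        · exact absurd h hxδ
      have hIval : γ - δ ∈ rootsIn Φ I := by
        refine ⟨hmem, ?_⟩
        have : γ - δ = fsum (c - Finsupp.single δ 1) := by
          rw [fsum_sub, fsum_single, one_smul, ← hrep]
        rw [this]
        exact fsum_mem_span hsuppI
      have hnegI : -(γ - δ) ∈ rootsIn Φ I :=
        ⟨neg_mem hΦ hIval.1, Submodule.neg_mem _ hIval.2⟩
      have hbΦ : (γ : V) + -(γ - δ) ∈ Φ := by
        rw [show γ + -(γ - δ) = δ by abel]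
        exact hΔ.subset hbΔ
      have := hcl γ hγΓ (-(γ - δ)) (Or.inl hnegI) hbΦ
      rw [show γ + -(γ - δ) = δ by abel] at this
      exact hbΓ this

lemma forward_path (hΦ : IsRootSystem Φ) (hΔ : IsBase Φ Δ) {I J K : Set V}
    (hJΔ : J ⊆ Δ) (hIJ : I ⊆ J) (hKJ : K ⊆ J)
    (hcl : IsClosedSubset Φ (rootsIn Φ I ∪ (posRootsIn Φ Δ J \ rootsIn Φ K)))
    {a : V} (haI : a ∈ I) (haK : a ∉ K) {b : V}
    (hpath : Relation.ReflTransGen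
      (fun x y => x ∈ I ∪ K ∧ y ∈ I ∪ K ∧ (inner ℝ x y : ℝ) ≠ 0) a b) :
    b ∈ I := by
  have hIΔ : I ⊆ Δ := Set.Subset.trans hIJ hJΔ
  have hKΔ : K ⊆ Δ := Set.Subset.trans hKJ hJΔ
  have hIKΔ : I ∪ K ⊆ Δ := Set.union_subset hIΔ hKΔ
  suffices h : b ∈ I ∧ ∃ (σ : V) (c : V →₀ ℝ), σ ∈ Φ ∧ σ = fsum c ∧ (∀ v, 0 ≤ c v) ∧
      ↑c.support ⊆ I ∧ b ∈ c.support ∧ a ∈ c.support from h.1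
  induction hpath with
  | refl =>
    refine ⟨haI, a, Finsupp.single a 1, hΔ.subset (hIΔ haI),
      by rw [fsum_single, one_smul], single_nonneg' a,
      by rw [supp_single_one]; exact Set.singleton_subset_iff.mpr haI, ?_, ?_⟩ <;>
    · exact Finsupp.mem_support_iff.mpr (by rw [Finsupp.single_eq_same]; norm_num)
  | tail hrest hstep ih =>
    rename_i δ ε
    obtain ⟨hδIK, hεIK, hδε⟩ := hstep
    obtain ⟨hδI, σ, c, hσΦ, hσrep, hnn, hsuppI, hδsupp, hasupp⟩ := ih
    by_cases hεsupp : ε ∈ c.support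
    · exact ⟨hsuppI hεsupp, σ, c, hσΦ, hσrep, hnn, hsuppI, hεsupp, hasupp⟩
    · have hεΔ : ε ∈ Δ := hIKΔ hεIK
      have hδΔ : δ ∈ Δ := hIΔ hδI
      have hδne : δ ≠ ε := fun h => hεsupp (h ▸ hδsupp)
      have hδεneg : (inner ℝ δ ε : ℝ) < 0 :=
        lt_of_le_of_ne (inner_simple_nonpos hΦ hΔ hδΔ hεΔ hδne) hδε
      have hlt : (inner ℝ σ ε : ℝ) < 0 := by
        have h1 : (inner ℝ ε σ : ℝ) = ∑ v ∈ c.support, c v * (inner ℝ ε v : ℝ) := by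
          rw [hσrep]; exact inner_fsum ε c
        have h2 : ∑ v ∈ c.support, c v * (inner ℝ ε v : ℝ) < ∑ v ∈ c.support, (0:ℝ) := by
          apply Finset.sum_lt_sum
          · intro v hv
            have hvΔ : v ∈ Δ := hIΔ (hsuppI hv)
            have hvε : v ≠ ε := fun h => hεsupp (h ▸ hv)
            have h3 : (inner ℝ ε v : ℝ) ≤ 0 := by
              rw [real_inner_comm]; exact inner_simple_nonpos hΦ hΔ hvΔ hεΔ hvε
            have h4 := hnn v
            nlinarith
          · refine ⟨δ, hδsupp, ?_⟩
            have hcδ : 0 < c δ :=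
              lt_of_le_of_ne (hnn δ) (Ne.symm (Finsupp.mem_support_iff.mp hδsupp))
            have : (inner ℝ ε δ : ℝ) < 0 := by rwa [real_inner_comm]
            exact mul_neg_of_pos_of_neg hcδ this
        rw [Finset.sum_const, smul_zero] at h2
        rw [real_inner_comm, h1]
        exact h2
      have hσne : σ ≠ -ε := by
        intro h
        have hrep2 : fsum c = fsum (Finsupp.single ε (-1:ℝ)) := by
          rw [← hσrep, h, fsum_single, neg_one_smul]
        have := fsum_uniq hΔ.indep (Set.Subset.trans hsuppI hIΔ)
          (by
            classical
            rw [Finsupp.support_single_ne_zero ε (by norm_num)]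
            simpa using hεΔ) hrep2
        have h2 := hnn ε
        rw [this, Finsupp.single_eq_same] at h2
        linarith
      have hτΦ : σ + ε ∈ Φ := add_mem_of_inner_lt hΦ hσΦ (hΔ.subset hεΔ) hσne hlt
      set d := c + Finsupp.single ε 1 with hd
      have hcε : c ε = 0 := Finsupp.notMem_support_iff.mp hεsupp
      have hτrep : σ + ε = fsum d := by rw [hd, fsum_add, fsum_single, one_smul, ← hσrep]
      have hdnn : ∀ v, 0 ≤ d v := fun v => by
        rw [hd, Finsupp.add_apply]
        exact add_nonneg (hnn v) (single_nonneg' ε v)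
      have hdsupp : ↑d.support ⊆ I ∪ {ε} := by
        classical
        intro x hx
        have := Finsupp.support_add (g₁ := c) (g₂ := Finsupp.single ε 1) hx
        simp only [Finset.mem_union] at this
        rcases this with h | h
        · exact Or.inl (hsuppI h)
        · right
          simpa using (Finsupp.mem_support_single _ _ _).mp h |>.1
      have hdε : d ε = 1 := by
        rw [hd, Finsupp.add_apply, hcε, Finsupp.single_eq_same, zero_add]
      have hdεsupp : ε ∈ d.support := Finsupp.mem_support_iff.mpr (by rw [hdε]; norm_num)
      have haε : a ≠ ε := fun h => hεsupp (h ▸ hasupp)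
      have hdasupp : a ∈ d.support := by
        rw [Finsupp.mem_support_iff, hd, Finsupp.add_apply, Finsupp.single_eq_of_ne'
          (Ne.symm haε), add_zero]
        exact Finsupp.mem_support_iff.mp hasupp
      by_cases hεI : ε ∈ I
      · exact ⟨hεI, σ + ε, d, hτΦ, hτrep, hdnn, by
          refine Set.Subset.trans hdsupp (Set.union_subset (le_refl I) ?_)
          exact Set.singleton_subset_iff.mpr hεI, hdεsupp, hdasupp⟩
      · exfalso
        have hεK : ε ∈ K := hεIK.resolve_left hεI
        have hτΓ : σ + ε ∈ rootsIn Φ I ∪ (posRootsIn Φ Δ J \ rootsIn Φ K) := by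
          refine Or.inr ⟨⟨⟨hτΦ, ?_⟩, hτΦ, d, Set.Subset.trans hdsupp
            (Set.union_subset hIΔ (Set.singleton_subset_iff.mpr hεΔ)), hdnn, hτrep⟩, ?_⟩
          · rw [hτrep]
            exact fsum_mem_span (Set.Subset.trans hdsupp
              (Set.union_subset hIJ (Set.singleton_subset_iff.mpr (hKJ hεK))))
          · rintro ⟨_, hspan⟩
            have := rep_supp_subset hΔ hKΔ (Set.Subset.trans hdsupp
              (Set.union_subset hIΔ (Set.singleton_subset_iff.mpr hεΔ)))
              (by rw [← hτrep]; exact hspan)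
            exact haK (this hdasupp)
        obtain ⟨n, hn⟩ := exists_nat_ge (ht d)
        exact lemD hΦ hΔ hJΔ hIJ hKJ hcl hεK hεI n (σ + ε) hτΦ d hτrep hdnn hdsupp hdε hτΓ hn

theorem statement0' (Φ Δ : Set V) (hΦ : IsRootSystem Φ) (hΔ : IsBase Φ Δ)
    (I J K : Set V) (hJΔ : J ⊆ Δ) (hIJ : I ⊆ J) (hKJ : K ⊆ J) :
    IsClosedSubset Φ (rootsIn Φ I ∪ (posRootsIn Φ Δ J \ rootsIn Φ K)) ↔
      ∃ X Y : Set V, X ⊆ J ∧ Y ⊆ J ∧ I ∪ K = X ∪ Y ∧ X ∩ Y = ∅ ∧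
        OrthogonalSets X Y ∧ I \ K ⊆ X ∧ K \ I ⊆ Y := by
  have hIΔ : I ⊆ Δ := Set.Subset.trans hIJ hJΔ
  have hKΔ : K ⊆ Δ := Set.Subset.trans hKJ hJΔ
  have hIKJ : I ∪ K ⊆ J := Set.union_subset hIJ hKJ
  constructor
  · -- closed ⇒ decomposition
    intro hcl
    set Step : V → V → Prop :=
      fun x y => x ∈ I ∪ K ∧ y ∈ I ∪ K ∧ (inner ℝ x y : ℝ) ≠ 0 with hStep
    refine ⟨{δ | δ ∈ I ∪ K ∧ ∃ a, (a ∈ I ∧ a ∉ K) ∧ Relation.ReflTransGen Step a δ},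
      (I ∪ K) \ {δ | δ ∈ I ∪ K ∧ ∃ a, (a ∈ I ∧ a ∉ K) ∧ Relation.ReflTransGen Step a δ},
      ?_, ?_, ?_, ?_, ?_, ?_, ?_⟩
    · exact fun x hx => hIKJ hx.1
    · exact fun x hx => hIKJ hx.1
    · ext z
      constructor
      · intro hz
        by_cases h : z ∈ {δ | δ ∈ I ∪ K ∧ ∃ a, (a ∈ I ∧ a ∉ K) ∧ Relation.ReflTransGen Step a δ}
        · exact Or.inl h
        · exact Or.inr ⟨hz, h⟩
      · rintro (h | h)
        · exact h.1
        · exact h.1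
    · ext z
      simp only [Set.mem_inter_iff, Set.mem_diff, Set.mem_empty_iff_false, iff_false]
      rintro ⟨h1, _, h2⟩
      exact h2 h1
    · intro x hx y hy
      by_contra hne
      exact hy.2 ⟨hy.1, hx.2.choose, hx.2.choose_spec.1,
        hx.2.choose_spec.2.tail ⟨hx.1, hy.1, hne⟩⟩
    · intro x hx
      exact ⟨Or.inl hx.1, x, ⟨hx.1, hx.2⟩, Relation.ReflTransGen.refl⟩
    · intro b hb
      refine ⟨Or.inr hb.1, ?_⟩
      rintro ⟨_, a, ⟨haI, haK⟩, hpath⟩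
      exact hb.2 (forward_path hΦ hΔ hJΔ hIJ hKJ hcl haI haK hpath)
  · -- decomposition ⇒ closed
    rintro ⟨X, Y, hXJ, hYJ, hunion, hdisj, horth, hIKX, hKIY⟩
    have hXΔ : X ⊆ Δ := Set.Subset.trans hXJ hJΔ
    have hYΔ : Y ⊆ Δ := Set.Subset.trans hYJ hJΔ
    have hXI : X ⊆ I := by
      intro x hx
      have hxIK : x ∈ I ∪ K := hunion ▸ Set.mem_union_left _ hx
      rcases hxIK with h | h
      · exact h
      · by_contra hxI
        have hxy : x ∈ X ∩ Y := ⟨hx, hKIY ⟨h, hxI⟩⟩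
        rw [hdisj] at hxy
        exact hxy
    have hYK : Y ⊆ K := by
      intro y hy
      have hyIK : y ∈ I ∪ K := hunion ▸ Set.mem_union_right _ hy
      rcases hyIK with h | h
      · by_contra hyK
        have hxy : y ∈ X ∩ Y := ⟨hIKX ⟨h, hyK⟩, hy⟩
        rw [hdisj] at hxy
        exact hxy
      · exact h
    have hIXY : I ⊆ X ∪ Y := fun x hx => hunion ▸ Set.mem_union_left _ hx
    have hKXY : K ⊆ X ∪ Y := fun x hx => hunion ▸ Set.mem_union_right _ hx
    have mixed : ∀ α β : V, α ∈ rootsIn Φ I → β ∈ posRootsIn Φ Δ J \ rootsIn Φ K →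
        α + β ∈ Φ →
        α + β ∈ rootsIn Φ I ∪ (posRootsIn Φ Δ J \ rootsIn Φ K) := by
      rintro α β ⟨hαΦ, hαI⟩ ⟨⟨⟨hβΦ, hβJ⟩, hβΦ', cβ, hcβ, hcβnn, hcβs⟩, hβK⟩ hs
      rw [← fsum_def] at hcβs
      by_cases hspanI : α + β ∈ span ℝ I
      · exact Or.inl ⟨hs, hspanI⟩
      obtain ⟨e, he, hes⟩ := exists_rep_of_mem_span hαI
      -- α + β is a positive root
      have hpos : IsNonnegComb Δ (α + β) := by
        rcases hΔ.pos_or_neg (α + β) hs with h | h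
        · exact h
        · exfalso
          obtain ⟨f, hf, hfnn, hfs⟩ := h
          rw [← fsum_def] at hfs
          have heq : e + cβ = -f := by
            apply fsum_uniq hΔ.indep
            · classical
              intro x hx
              have := Finsupp.support_add (g₁ := e) (g₂ := cβ) hx
              simp only [Finset.mem_union] at this
              rcases this with h | h
              · exact hIΔ (he h)
              · exact hcβ h
            · intro x hx
              exact hf (by simpa using hx)
            · rw [fsum_add, fsum_neg, ← hes, ← hcβs, ← hfs]
              abel
          have hcβI : ↑cβ.support ⊆ I := by
            intro v hv
            by_contra hvI
            have hev : e v = 0 := by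
              by_contra h0
              exact hvI (he (Finsupp.mem_support_iff.mpr h0))
            have h1 := DFunLike.congr_fun heq v
            simp only [Finsupp.add_apply, hev, zero_add, Finsupp.coe_neg, Pi.neg_apply] at h1
            have h2 := hfnn v
            have h3 := hcβnn v
            have : cβ v = 0 := by linarith
            exact Finsupp.mem_support_iff.mp hv this
          apply hspanI
          have hβI : β ∈ span ℝ I := by rw [hcβs]; exact fsum_mem_span hcβI
          exact Submodule.add_mem _ hαI hβI
      have hspanJ : α + β ∈ span ℝ J :=
        Submodule.add_mem _ (span_mono hIJ hαI) hβJ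
      have hspanK : α + β ∉ span ℝ K := by
        intro hK
        rcases spanSplit hΦ hΔ hXΔ hYΔ horth hs (span_mono hKXY hK) with h | h
        · exact hspanI (span_mono hXI h)
        · have hβXY : β ∈ span ℝ (X ∪ Y) := by
            have h1 : (α + β) - α ∈ span ℝ (X ∪ Y) :=
              Submodule.sub_mem _ (span_mono Set.subset_union_right h)
                (span_mono hIXY hαI)
            simpa using h1
          rcases spanSplit hΦ hΔ hXΔ hYΔ horth hβΦ hβXY with h2 | h2
          · exact hspanI (Submodule.add_mem _ hαI (span_mono hXI h2))
          · exact hβK ⟨hβΦ, span_mono hYK h2⟩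
      exact Or.inr ⟨⟨⟨hs, hspanJ⟩, hs, hpos⟩, fun h => hspanK h.2⟩
    intro α hα β hβ hs
    rcases hα with hα1 | hα2
    · rcases hβ with hβ1 | hβ2
      · exact Or.inl ⟨hs, Submodule.add_mem _ hα1.2 hβ1.2⟩
      · exact mixed α β hα1 hβ2 hs
    · rcases hβ with hβ1 | hβ2
      · rw [add_comm] at hs ⊢
        exact mixed β α hβ1 hα2 hs
      · -- both in Γ2
        obtain ⟨⟨⟨hαΦ, hαJ⟩, hαΦ', cα, hcα, hcαnn, hcαs⟩, hαK⟩ := hα2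
        obtain ⟨⟨⟨hβΦ, hβJ⟩, hβΦ', cβ, hcβ, hcβnn, hcβs⟩, hβK⟩ := hβ2
        rw [← fsum_def] at hcαs hcβs
        have hpos : IsNonnegComb Δ (α + β) :=
          nonneg_add ⟨cα, hcα, hcαnn, by rw [hcαs]; rfl⟩ ⟨cβ, hcβ, hcβnn, by rw [hcβs]; rfl⟩
        have hspanJ : α + β ∈ span ℝ J := Submodule.add_mem _ hαJ hβJ
        by_cases hK : α + β ∈ span ℝ K
        · rcases spanSplit hΦ hΔ hXΔ hYΔ horth hs (span_mono hKXY hK) with h | h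
          · exact Or.inl ⟨hs, span_mono hXI h⟩
          · exfalso
            have hsum : α + β = fsum (cα + cβ) := by rw [fsum_add, ← hcαs, ← hcβs]
            have hsuppΔ : ↑(cα + cβ).support ⊆ Δ := by
              classical
              intro x hx
              have := Finsupp.support_add (g₁ := cα) (g₂ := cβ) hx
              simp only [Finset.mem_union] at this
              rcases this with h2 | h2
              · exact hcα h2
              · exact hcβ h2
            have hsuppY : ↑(cα + cβ).support ⊆ Y :=
              rep_supp_subset hΔ hYΔ hsuppΔ (by rw [← hsum]; exact h)
            have hcαY : ↑cα.support ⊆ Y := by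
              intro v hv
              by_contra hvY
              have h0 : (cα + cβ) v = 0 := by
                by_contra h0
                exact hvY (hsuppY (Finsupp.mem_support_iff.mpr h0))
              rw [Finsupp.add_apply] at h0
              have h1 := hcαnn v
              have h2 := hcβnn v
              have : cα v = 0 := by linarith
              exact Finsupp.mem_support_iff.mp hv this
            exact hαK ⟨hαΦ, span_mono hYK (by rw [hcαs]; exact fsum_mem_span hcαY)⟩
        · exact Or.inr ⟨⟨⟨hs, hspanJ⟩, hs, hpos⟩, fun h => hK h.2⟩

/-- For `I, K ⊆ J ⊆ Π`, the set `Γ(I,J,K) := Φ_I ∪ (Φ_J⁺ \ Φ_K)` is a closed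
subset of `Φ` if and only if there exist `X, Y ⊆ J` with `I ∪ K = X ⊔ Y`, `X ⊥ Y`,
`X ⊇ I \ K` and `Y ⊇ K \ I`. -/
theorem statement0 (Φ Δ : Set V) (hΦ : IsRootSystem Φ) (hΔ : IsBase Φ Δ)
    (I J K : Set V) (hJΔ : J ⊆ Δ) (hIJ : I ⊆ J) (hKJ : K ⊆ J) :
    IsClosedSubset Φ (rootsIn Φ I ∪ (posRootsIn Φ Δ J \ rootsIn Φ K)) ↔
      ∃ X Y : Set V, X ⊆ J ∧ Y ⊆ J ∧ I ∪ K = X ∪ Y ∧ X ∩ Y = ∅ ∧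
        OrthogonalSets X Y ∧ I \ K ⊆ X ∧ K \ I ⊆ Y :=
  statement0' Φ Δ hΦ hΔ I J K hJΔ hIJ hKJ
end

section
/- Let I, K ⊆ J ⊆ Π. Then Φ \ (−Γ(I,J,K)) = (Φ⁺ \ Φ_I) ∪ (Φ⁻ \ Φ_J) ∪ (Φ_K⁻ \ Φ_I), and the three sets on the right-hand side are pairwise disjoint. -/
variable {V : Type*} [NormedAddCommGroup V] [InnerProductSpace ℝ V]

lemma aux_eq_zero {Δ : Set V} (hind : LinearIndependent ℝ (Subtype.val : Δ → V))
    {α : V} (h1 : IsNonnegComb Δ α) (h2 : IsNonnegComb Δ (-α)) : α = 0 := by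
  classical
  obtain ⟨c, hc, hc0, hcs⟩ := h1
  obtain ⟨d, hd, hd0, hds⟩ := h2
  have hmem : c + d ∈ Finsupp.supported ℝ ℝ Δ := by
    intro v hv
    rcases Finset.mem_union.mp (Finsupp.support_add hv) with h | h
    · exact hc h
    · exact hd h
  have hsum : (Finsupp.linearCombination ℝ id) (c + d) = 0 := by
    rw [Finsupp.linearCombination_apply,
      Finsupp.sum_add_index (by intro a _; simp) (by intro a _ r s; rw [add_smul])]
    simp only [id]
    rw [← hcs, ← hds]
    abel
  have hcd : c + d = 0 := (linearIndepOn_iff.mp (linearIndependent_subtype_iff.mp hind)) _ hmem hsum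
  have hczero : c = 0 := by
    ext v
    have h : c v + d v = 0 := by
      have := DFunLike.congr_fun hcd v
      simpa using this
    have := hc0 v; have := hd0 v
    simp only [Finsupp.coe_zero, Pi.zero_apply]
    linarith
  rw [hcs, hczero]
  simp

lemma aux_not_both {Φ Δ : Set V} (hΦ : IsRootSystem Φ) (hΔ : IsBase Φ Δ)
    {α : V} (hα : α ∈ Φ) : ¬ (IsNonnegComb Δ α ∧ IsNonnegComb Δ (-α)) := by
  rintro ⟨h1, h2⟩
  exact hΦ.zero_not_mem (aux_eq_zero hΔ.indep h1 h2 ▸ hα)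

lemma aux_neg_mem {Φ : Set V} (hΦ : IsRootSystem Φ) {α : V} (hα : α ∈ Φ) : -α ∈ Φ := by
  have h := hΦ.reflect_mem α hα α hα
  have hα0 : α ≠ 0 := fun h0 => hΦ.zero_not_mem (h0 ▸ hα)
  have hinner : (inner ℝ α α : ℝ) ≠ 0 := fun h0 => hα0 (inner_self_eq_zero.mp h0)
  have : 2 * (inner ℝ α α : ℝ) / (inner ℝ α α : ℝ) = 2 := by field_simp
  rw [this] at h
  have : α - (2 : ℝ) • α = -α := by
    rw [two_smul]; abel
  rwa [this] at h

/-- For `I, K ⊆ J ⊆ Π`,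
`Φ \ (−Γ(I,J,K)) = (Φ⁺ \ Φ_I) ∪ (Φ⁻ \ Φ_J) ∪ (Φ_K⁻ \ Φ_I)`,
and the three sets on the right-hand side are pairwise disjoint. -/
theorem statement2 (Φ Δ : Set V) (hΦ : IsRootSystem Φ) (hΔ : IsBase Φ Δ)
    (I J K : Set V) (hJΔ : J ⊆ Δ) (hIJ : I ⊆ J) (hKJ : K ⊆ J) :
    Φ \ ((fun α => -α) '' (rootsIn Φ I ∪ (posRootsIn Φ Δ J \ rootsIn Φ K))) =
      (posRoots Φ Δ \ rootsIn Φ I) ∪ (negRoots Φ Δ \ rootsIn Φ J) ∪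
        (negRootsIn Φ Δ K \ rootsIn Φ I) ∧
    Disjoint (posRoots Φ Δ \ rootsIn Φ I) (negRoots Φ Δ \ rootsIn Φ J) ∧
    Disjoint (posRoots Φ Δ \ rootsIn Φ I) (negRootsIn Φ Δ K \ rootsIn Φ I) ∧
    Disjoint (negRoots Φ Δ \ rootsIn Φ J) (negRootsIn Φ Δ K \ rootsIn Φ I) := by
  have hIJ' : rootsIn Φ I ⊆ rootsIn Φ J :=
    Set.inter_subset_inter_right _ (Submodule.span_mono hIJ)
  have hKJ' : rootsIn Φ K ⊆ rootsIn Φ J :=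
    Set.inter_subset_inter_right _ (Submodule.span_mono hKJ)
  -- rootsIn is closed under negation
  have hnegIn : ∀ A : Set V, ∀ α, α ∈ rootsIn Φ A ↔ (-α ∈ rootsIn Φ A ∧ α ∈ Φ) := by
    intro A α
    constructor
    · rintro ⟨h1, h2⟩
      exact ⟨⟨aux_neg_mem hΦ h1, Submodule.neg_mem _ h2⟩, h1⟩
    · rintro ⟨⟨h1, h2⟩, h3⟩
      exact ⟨h3, by simpa using Submodule.neg_mem _ h2⟩
  have hposneg : ∀ α ∈ Φ, α ∈ posRoots Φ Δ ∨ α ∈ negRoots Φ Δ := by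
    intro α hα
    rcases hΔ.pos_or_neg α hα with h | h
    · exact Or.inl ⟨hα, h⟩
    · exact Or.inr ⟨hα, h⟩
  have hnotboth : ∀ α, ¬ (α ∈ posRoots Φ Δ ∧ α ∈ negRoots Φ Δ) := by
    rintro α ⟨⟨h1, h2⟩, ⟨h3, h4⟩⟩
    exact aux_not_both hΦ hΔ h1 ⟨h2, h4⟩
  refine ⟨?_, ?_, ?_, ?_⟩
  · ext α
    simp only [Set.mem_diff, Set.mem_image, Set.mem_union]
    constructor
    · rintro ⟨hα, hnot⟩
      push_neg at hnot
      have hnI : α ∉ rootsIn Φ I := by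
        intro hmem
        exact hnot (-α) (Or.inl (((hnegIn I α).mp hmem).1)) (by simp)
      have hnJK : ¬ (-α ∈ posRootsIn Φ Δ J ∧ -α ∉ rootsIn Φ K) := by
        rintro ⟨h1, h2⟩
        exact hnot (-α) (Or.inr ⟨h1, h2⟩) (by simp)
      rcases hposneg α hα with hp | hn
      · exact Or.inl (Or.inl ⟨hp, hnI⟩)
      · -- α negative, so -α is positive
        have hnegα : -α ∈ Φ := aux_neg_mem hΦ hα
        have hposnegα : -α ∈ posRoots Φ Δ := ⟨hnegα, by simpa using hn.2⟩
        by_cases hJ : α ∈ rootsIn Φ J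
        · have h1 : -α ∈ posRootsIn Φ Δ J := ⟨((hnegIn J α).mp hJ).1, hposnegα⟩
          have hK : -α ∈ rootsIn Φ K := by
            by_contra hK
            exact hnJK ⟨h1, hK⟩
          have hKα : α ∈ rootsIn Φ K := by
            rw [hnegIn K α]; exact ⟨hK, hα⟩
          exact Or.inr ⟨⟨hKα, hn⟩, hnI⟩
        · exact Or.inl (Or.inr ⟨hn, hJ⟩)
    · rintro h
      have hαΦ : α ∈ Φ := by
        rcases h with (h | h) | h
        · exact h.1.1
        · exact h.1.1
        · exact h.1.1.1
      refine ⟨hαΦ, ?_⟩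
      rintro ⟨β, hβ, rfl⟩
      rcases h with (⟨h1, h2⟩ | ⟨h1, h2⟩) | ⟨h1, h2⟩
      · rcases hβ with hβI | ⟨hβ1, hβK⟩
        · exact h2 (((hnegIn I β).mp hβI).1)
        · refine hnotboth (-β) ⟨h1, aux_neg_mem hΦ hβ1.2.1, ?_⟩
          simpa using hβ1.2.2
      · rcases hβ with hβI | ⟨hβ1, hβK⟩
        · exact h2 (hIJ' (((hnegIn I β).mp hβI).1))
        · exact h2 (((hnegIn J β).mp hβ1.1).1)
      · rcases hβ with hβI | ⟨hβ1, hβK⟩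
        · exact h2 (((hnegIn I β).mp hβI).1)
        · exact hβK ((hnegIn K β).mpr ⟨h1.1, hβ1.1.1⟩)
  · rw [Set.disjoint_left]
    rintro α ⟨h1, _⟩ ⟨h2, _⟩
    exact hnotboth α ⟨h1, h2⟩
  · rw [Set.disjoint_left]
    rintro α ⟨h1, _⟩ ⟨⟨_, h2⟩, _⟩
    exact hnotboth α ⟨h1, h2⟩
  · rw [Set.disjoint_left]
    rintro α ⟨_, h1⟩ ⟨⟨h2, _⟩, _⟩
    exact h1 (hKJ' h2)
end

section
/- Let I, L ⊆ Π. Every double coset W_L w W_I ⊆ W such that w⁻¹(Φ_L) ∩ Φ_I = ∅ contains exactly one left coset w'W_I with w'⁻¹(Φ_L⁺) ⊆ Φ⁺ \ Φ_I. Consequently, the natural projection W/W_I → W_L\W/W_I restricts to a bijection from {wW_I ∈ W/W_I | w⁻¹(Φ_L⁺) ⊆ Φ⁺ \ Φ_I} onto {W_L w W_I ∈ W_L\W/W_I | w⁻¹(Φ_L) ∩ Φ_I = ∅} (the latter condition being independent of the representative w of the double coset). -/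
variable {V : Type*} [NormedAddCommGroup V] [InnerProductSpace ℝ V]

/-- The group generated by the reflections `s α`, `α ∈ A`. -/
def weylGroupOf (A : Set V) (s : V → V ≃ₗ[ℝ] V) : Subgroup (V ≃ₗ[ℝ] V) :=
  Subgroup.closure (s '' A)

/-- `s α` is the orthogonal reflection in the root `α`, for every `α ∈ Φ`. -/
def IsReflectionFamily (Φ : Set V) (s : V → V ≃ₗ[ℝ] V) : Prop :=
  ∀ α ∈ Φ, ∀ x : V, s α x = x - (2 * (inner ℝ x α : ℝ) / (inner ℝ α α : ℝ)) • α
namespace RSAux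

variable {V : Type*} [NormedAddCommGroup V] [InnerProductSpace ℝ V]
variable {Φ Δ : Set V} {s : V → V ≃ₗ[ℝ] V}

lemma ne_zero_of_mem (hΦ : IsRootSystem Φ) {α : V} (hα : α ∈ Φ) : α ≠ 0 :=
  fun h => hΦ.zero_not_mem (h ▸ hα)

lemma inner_self_ne (hΦ : IsRootSystem Φ) {α : V} (hα : α ∈ Φ) : (inner ℝ α α : ℝ) ≠ 0 := by
  intro h
  exact ne_zero_of_mem hΦ hα (inner_self_eq_zero.mp h)

lemma neg_mem (hΦ : IsRootSystem Φ) {α : V} (hα : α ∈ Φ) : -α ∈ Φ := by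
  have h := hΦ.reflect_mem α hα α hα
  have h2 : 2 * (inner ℝ α α : ℝ) / (inner ℝ α α : ℝ) = 2 := by
    rw [mul_div_assoc, div_self (inner_self_ne hΦ hα), mul_one]
  rw [h2] at h
  have : α - (2 : ℝ) • α = -α := by
    rw [two_smul]; abel
  rwa [this] at h

lemma s_apply (hs : IsReflectionFamily Φ s) {α : V} (hα : α ∈ Φ) (x : V) :
    s α x = x - (2 * (inner ℝ x α : ℝ) / (inner ℝ α α : ℝ)) • α := hs α hα x

lemma s_mem (hΦ : IsRootSystem Φ) (hs : IsReflectionFamily Φ s) {α β : V}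
    (hα : α ∈ Φ) (hβ : β ∈ Φ) : s α β ∈ Φ := by
  rw [s_apply hs hα]
  exact hΦ.reflect_mem α hα β hβ

lemma s_self (hΦ : IsRootSystem Φ) (hs : IsReflectionFamily Φ s) {α : V} (hα : α ∈ Φ) :
    s α α = -α := by
  rw [s_apply hs hα]
  have h2 : 2 * (inner ℝ α α : ℝ) / (inner ℝ α α : ℝ) = 2 := by
    rw [mul_div_assoc, div_self (inner_self_ne hΦ hα), mul_one]
  rw [h2, two_smul]; abel

lemma s_s (hΦ : IsRootSystem Φ) (hs : IsReflectionFamily Φ s) {α : V} (hα : α ∈ Φ) (x : V) :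
    s α (s α x) = x := by
  have hd := inner_self_ne hΦ hα
  rw [s_apply hs hα, s_apply hs hα x, inner_sub_left, real_inner_smul_left]
  have : 2 * ((inner ℝ x α : ℝ) - 2 * inner ℝ x α / inner ℝ α α * inner ℝ α α) / inner ℝ α α
      = -(2 * (inner ℝ x α : ℝ) / inner ℝ α α) := by
    field_simp; ring
  rw [this, neg_smul, sub_neg_eq_add, sub_add_cancel]

lemma s_mul_s (hΦ : IsRootSystem Φ) (hs : IsReflectionFamily Φ s) {α : V} (hα : α ∈ Φ) :
    s α * s α = 1 := by
  ext x
  exact s_s hΦ hs hα x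

lemma s_inv (hΦ : IsRootSystem Φ) (hs : IsReflectionFamily Φ s) {α : V} (hα : α ∈ Φ) :
    (s α)⁻¹ = s α := by
  rw [eq_comm, eq_inv_iff_mul_eq_one]
  exact s_mul_s hΦ hs hα

/-- Preservation of the inner product. -/
def PreservesInner (w : V ≃ₗ[ℝ] V) : Prop :=
  ∀ x y : V, (inner ℝ (w x) (w y) : ℝ) = inner ℝ x y

lemma s_preservesInner (hΦ : IsRootSystem Φ) (hs : IsReflectionFamily Φ s) {α : V}
    (hα : α ∈ Φ) : PreservesInner (s α) := by
  intro x y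
  have hd := inner_self_ne hΦ hα
  rw [s_apply hs hα, s_apply hs hα]
  rw [inner_sub_left, inner_sub_right, inner_sub_right, real_inner_smul_left,
    real_inner_smul_left, real_inner_smul_right, real_inner_smul_right]
  rw [real_inner_comm α y]
  field_simp
  ring

end RSAux
namespace RSAux

variable {V : Type*} [NormedAddCommGroup V] [InnerProductSpace ℝ V]
variable {Φ Δ : Set V} {s : V → V ≃ₗ[ℝ] V}

/-- The product of reflections attached to a list of roots. -/
def wordProd (s : V → V ≃ₗ[ℝ] V) (l : List V) : V ≃ₗ[ℝ] V := (l.map s).prod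

@[simp] lemma wordProd_nil : wordProd s ([] : List V) = 1 := rfl

@[simp] lemma wordProd_cons (δ : V) (l : List V) :
    wordProd s (δ :: l) = s δ * wordProd s l := by
  simp [wordProd]

lemma wordProd_append (l₁ l₂ : List V) :
    wordProd s (l₁ ++ l₂) = wordProd s l₁ * wordProd s l₂ := by
  simp [wordProd]

lemma wordProd_concat (l : List V) (δ : V) :
    wordProd s (l.concat δ) = wordProd s l * s δ := by
  rw [List.concat_eq_append, wordProd_append]
  simp [wordProd]

lemma wordProd_reverse (hΦ : IsRootSystem Φ) (hs : IsReflectionFamily Φ s) {l : List V}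
    (hl : ∀ δ ∈ l, δ ∈ Φ) : wordProd s l.reverse = (wordProd s l)⁻¹ := by
  induction l with
  | nil => simp
  | cons δ l ih =>
    rw [List.reverse_cons, ← List.concat_eq_append, wordProd_concat, wordProd_cons,
      mul_inv_rev, ih (fun x hx => hl x (List.mem_cons_of_mem _ hx)),
      s_inv hΦ hs (hl δ (List.mem_cons_self))]

lemma mul_apply (e f : V ≃ₗ[ℝ] V) (x : V) : (e * f) x = e (f x) := rfl

lemma wordProd_mem_weylGroup {A : Set V} {l : List V} (hl : ∀ δ ∈ l, δ ∈ A) :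
    wordProd s l ∈ weylGroupOf A s := by
  induction l with
  | nil => exact Subgroup.one_mem _
  | cons δ l ih =>
    rw [wordProd_cons]
    exact Subgroup.mul_mem _
      (Subgroup.subset_closure ⟨δ, hl δ (List.mem_cons_self), rfl⟩)
      (ih fun x hx => hl x (List.mem_cons_of_mem _ hx))

/-- Every element of `W_A` (with `A ⊆ Φ`) is the product of a word in `A`. -/
lemma exists_word (hΦ : IsRootSystem Φ) (hs : IsReflectionFamily Φ s) {A : Set V}
    (hA : A ⊆ Φ) {w : V ≃ₗ[ℝ] V} (hw : w ∈ weylGroupOf A s) :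
    ∃ l : List V, (∀ δ ∈ l, δ ∈ A) ∧ w = wordProd s l := by
  induction hw using Subgroup.closure_induction with
  | mem x hx =>
    obtain ⟨δ, hδ, rfl⟩ := hx
    exact ⟨[δ], by simpa using hδ, by simp⟩
  | one => exact ⟨[], by simp, rfl⟩
  | mul x y hx hy ihx ihy =>
    obtain ⟨l₁, h₁, rfl⟩ := ihx
    obtain ⟨l₂, h₂, rfl⟩ := ihy
    refine ⟨l₁ ++ l₂, ?_, (wordProd_append l₁ l₂).symm⟩
    intro δ hδ
    rcases List.mem_append.mp hδ with h | h
    exacts [h₁ δ h, h₂ δ h]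
  | inv x hx ihx =>
    obtain ⟨l, h, rfl⟩ := ihx
    exact ⟨l.reverse, fun δ hδ => h δ (List.mem_reverse.mp hδ),
      (wordProd_reverse hΦ hs (fun δ hδ => hA (h δ hδ))).symm⟩

lemma wordProd_mem_Φ (hΦ : IsRootSystem Φ) (hs : IsReflectionFamily Φ s) {l : List V}
    (hl : ∀ δ ∈ l, δ ∈ Φ) {α : V} (hα : α ∈ Φ) : wordProd s l α ∈ Φ := by
  induction l with
  | nil => simpa
  | cons δ l ih =>
    rw [wordProd_cons]
    exact s_mem hΦ hs (hl δ (List.mem_cons_self))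
      (ih fun x hx => hl x (List.mem_cons_of_mem _ hx))

lemma wordProd_mem_span (hs : IsReflectionFamily Φ s) {A : Set V} (hA : A ⊆ Φ) {l : List V}
    (hl : ∀ δ ∈ l, δ ∈ A) {x : V} (hx : x ∈ Submodule.span ℝ A) :
    wordProd s l x ∈ Submodule.span ℝ A := by
  induction l with
  | nil => simpa
  | cons δ l ih =>
    rw [wordProd_cons]
    have hδA := hl δ (List.mem_cons_self)
    have hy := ih fun x hx => hl x (List.mem_cons_of_mem _ hx)
    rw [mul_apply, s_apply hs (hA hδA)]
    exact Submodule.sub_mem _ hy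
      (Submodule.smul_mem _ _ (Submodule.subset_span hδA))

lemma wordProd_preservesInner (hΦ : IsRootSystem Φ) (hs : IsReflectionFamily Φ s) {l : List V}
    (hl : ∀ δ ∈ l, δ ∈ Φ) : PreservesInner (wordProd s l) := by
  induction l with
  | nil => intro x y; simp
  | cons δ l ih =>
    intro x y
    rw [wordProd_cons, mul_apply, mul_apply,
      s_preservesInner hΦ hs (hl δ (List.mem_cons_self))]
    exact ih (fun x hx => hl x (List.mem_cons_of_mem _ hx)) x y

/-- Conjugation formula : `s (w γ) = w * s γ * w⁻¹` for inner-product preserving `w`. -/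
lemma s_conj (hΦ : IsRootSystem Φ) (hs : IsReflectionFamily Φ s) {w : V ≃ₗ[ℝ] V}
    (hw : PreservesInner w) {γ : V} (hγ : γ ∈ Φ) (hwγ : w γ ∈ Φ) :
    s (w γ) = w * s γ * w⁻¹ := by
  ext x
  rw [s_apply hs hwγ, mul_apply, mul_apply,
    s_apply hs hγ, map_sub, map_smul]
  have h1 : (inner ℝ (w⁻¹ x) γ : ℝ) = inner ℝ x (w γ) := by
    have := hw (w⁻¹ x) γ
    rw [show w (w⁻¹ x) = x from LinearEquiv.apply_symm_apply w x] at this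
    exact this.symm
  have h2 : (inner ℝ γ γ : ℝ) = inner ℝ (w γ) (w γ) := (hw γ γ).symm
  rw [show w (w⁻¹ x) = x from LinearEquiv.apply_symm_apply w x, h1, h2]

end RSAux
namespace RSAux

variable {V : Type*} [NormedAddCommGroup V] [InnerProductSpace ℝ V]
variable {Φ Δ : Set V} {s : V → V ≃ₗ[ℝ] V}

lemma coeff_unique (hΔ : IsBase Φ Δ) {c d : V →₀ ℝ} (hc : (c.support : Set V) ⊆ Δ)
    (hd : (d.support : Set V) ⊆ Δ)
    (h : c.sum (fun v r => r • v) = d.sum (fun v r => r • v)) : c = d := by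
  have hi := linearIndepOn_iff.mp (linearIndependent_subtype_iff.mp hΔ.indep)
  have hsupp : c - d ∈ Finsupp.supported ℝ ℝ Δ := by
    rw [Finsupp.mem_supported]
    refine Set.Subset.trans ?_ (Set.union_subset hc hd)
    intro x hx
    classical
    have := Finsupp.support_sub (f := c) (g := d) hx
    simpa using this
  have hz : Finsupp.linearCombination ℝ id (c - d) = 0 := by
    rw [map_sub]
    rw [Finsupp.linearCombination_apply, Finsupp.linearCombination_apply]
    simpa [id] using sub_eq_zero_of_eq h
  have := hi (c - d) hsupp hz
  exact sub_eq_zero.mp this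

lemma nonnegComb_sum_mem_span {A : Set V} {c : V →₀ ℝ} (hc : (c.support : Set V) ⊆ A) :
    c.sum (fun v r => r • v) ∈ Submodule.span ℝ A := by
  refine Submodule.sum_mem _ fun v hv => ?_
  exact Submodule.smul_mem _ _ (Submodule.subset_span (hc hv))

lemma span_base_top (hΦ : IsRootSystem Φ) (hΔ : IsBase Φ Δ) : Submodule.span ℝ Δ = ⊤ := by
  rw [eq_top_iff, ← hΦ.span_top, Submodule.span_le]
  intro α hα
  rcases hΔ.pos_or_neg α hα with ⟨c, hc, _, rfl⟩ | ⟨c, hc, _, h⟩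
  · exact nonnegComb_sum_mem_span hc
  · have : -α ∈ Submodule.span ℝ Δ := h ▸ nonnegComb_sum_mem_span hc
    simpa using Submodule.neg_mem _ this

lemma not_pos_and_neg' (hΔ : IsBase Φ Δ) {α : V} (hα : α ≠ 0)
    (hp : IsNonnegComb Δ α) (hn : IsNonnegComb Δ (-α)) : False := by
  obtain ⟨c, hc, hcn, hcs⟩ := hp
  obtain ⟨d, hd, hdn, hds⟩ := hn
  have hsum : (c + d).sum (fun v r => r • v) = (0 : V →₀ ℝ).sum (fun v r => r • v) := by
    rw [Finsupp.sum_add_index' (fun a => zero_smul ℝ a) (fun a b₁ b₂ => add_smul b₁ b₂ a)]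
    simp [← hcs, ← hds]
  have hcd : c + d = 0 := by
    refine coeff_unique hΔ ?_ (by simp) hsum
    classical
    refine Set.Subset.trans ?_ (Set.union_subset hc hd)
    intro x hx
    simpa using Finsupp.support_add (g₁ := c) (g₂ := d) hx
  have hc0 : c = 0 := by
    ext v
    have h1 : c v + d v = 0 := by
      have := congrArg (fun f => f v) hcd
      simpa using this
    have := hcn v
    have := hdn v
    simp only [Finsupp.coe_zero, Pi.zero_apply]
    linarith
  exact hα (by simp [hcs, hc0])

lemma nonneg_zero : IsNonnegComb Δ (0 : V) := ⟨0, by simp, by simp, by simp⟩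

lemma nonneg_add {α β : V} (hα : IsNonnegComb Δ α) (hβ : IsNonnegComb Δ β) :
    IsNonnegComb Δ (α + β) := by
  obtain ⟨c, hc, hcn, rfl⟩ := hα
  obtain ⟨d, hd, hdn, rfl⟩ := hβ
  refine ⟨c + d, ?_, fun v => by simpa using add_nonneg (hcn v) (hdn v), ?_⟩
  · classical
    refine Set.Subset.trans ?_ (Set.union_subset hc hd)
    intro x hx
    simpa using Finsupp.support_add (g₁ := c) (g₂ := d) hx
  · rw [Finsupp.sum_add_index' (fun a => zero_smul ℝ a) (fun a b₁ b₂ => add_smul b₁ b₂ a)]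

lemma nonneg_smul {α : V} {r : ℝ} (hr : 0 ≤ r) (hα : IsNonnegComb Δ α) :
    IsNonnegComb Δ (r • α) := by
  obtain ⟨c, hc, hcn, rfl⟩ := hα
  have hss : ((r • c).support : Set V) ⊆ (c.support : Set V) := by
    intro x hx
    exact_mod_cast Finsupp.support_smul (b := r) (g := c) (by exact_mod_cast hx)
  refine ⟨r • c, Set.Subset.trans hss hc,
    fun v => by simpa using mul_nonneg hr (hcn v), ?_⟩
  rw [Finsupp.smul_sum, Finsupp.sum_smul_index (fun i => zero_smul ℝ i)]
  simp [smul_smul]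

lemma nonneg_single {δ : V} (hδ : δ ∈ Δ) : IsNonnegComb Δ δ := by
  classical
  refine ⟨Finsupp.single δ 1, ?_, fun v => ?_, ?_⟩
  · intro x hx
    have := Finsupp.support_single_subset (a := δ) (b := (1:ℝ)) hx
    simp at this
    exact this ▸ hδ
  · rw [Finsupp.single_apply]
    split <;> norm_num
  · rw [Finsupp.sum_single_index (by simp)]
    simp

lemma mem_pos_or_neg (hΔ : IsBase Φ Δ) {α : V} (hα : α ∈ Φ) :
    α ∈ posRoots Φ Δ ∨ α ∈ negRoots Φ Δ := by
  rcases hΔ.pos_or_neg α hα with h | h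
  · exact Or.inl ⟨hα, h⟩
  · exact Or.inr ⟨hα, h⟩

lemma not_pos_and_neg (hΦ : IsRootSystem Φ) (hΔ : IsBase Φ Δ) {α : V}
    (hp : α ∈ posRoots Φ Δ) (hn : α ∈ negRoots Φ Δ) : False :=
  not_pos_and_neg' hΔ (ne_zero_of_mem hΦ hp.1) hp.2 hn.2

lemma neg_pos_iff_neg (hΦ : IsRootSystem Φ) {α : V} :
    α ∈ negRoots Φ Δ ↔ -α ∈ posRoots Φ Δ := by
  constructor
  · rintro ⟨h1, h2⟩
    exact ⟨neg_mem hΦ h1, h2⟩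
  · rintro ⟨h1, h2⟩
    refine ⟨by simpa using neg_mem hΦ h1, h2⟩

lemma pos_neg_iff (hΦ : IsRootSystem Φ) {α : V} :
    α ∈ posRoots Φ Δ ↔ -α ∈ negRoots Φ Δ := by
  rw [neg_pos_iff_neg hΦ, neg_neg]

end RSAux
namespace RSAux

variable {V : Type*} [NormedAddCommGroup V] [InnerProductSpace ℝ V]
variable {Φ Δ : Set V} {s : V → V ≃ₗ[ℝ] V}

lemma pos_span_single (hΦ : IsRootSystem Φ) (hΔ : IsBase Φ Δ) {δ α : V} (hδ : δ ∈ Δ)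
    (hα : α ∈ posRoots Φ Δ) (hsp : α ∈ Submodule.span ℝ ({δ} : Set V)) : α = δ := by
  obtain ⟨c, rfl⟩ := Submodule.mem_span_singleton.mp hsp
  have hδΦ := hΔ.subset hδ
  rcases hΦ.reduced δ hδΦ c hα.1 with rfl | rfl
  · simp
  · exfalso
    refine not_pos_and_neg hΦ hΔ (⟨hδΦ, nonneg_single hδ⟩ : δ ∈ posRoots Φ Δ) ⟨hδΦ, ?_⟩
    have := hα.2
    simpa using this

/-- A simple reflection permutes the positive roots other than the simple root itself. -/
lemma s_simple_pos (hΦ : IsRootSystem Φ) (hΔ : IsBase Φ Δ) (hs : IsReflectionFamily Φ s)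
    {δ α : V} (hδ : δ ∈ Δ) (hα : α ∈ posRoots Φ Δ) (hne : α ≠ δ) :
    s δ α ∈ posRoots Φ Δ ∧ s δ α ≠ δ := by
  classical
  have hδΦ := hΔ.subset hδ
  have hαΦ := hα.1
  have hsαΦ : s δ α ∈ Φ := s_mem hΦ hs hδΦ hαΦ
  have hnotspan : α ∉ Submodule.span ℝ ({δ} : Set V) :=
    fun h => hne (pos_span_single hΦ hΔ hδ hα h)
  have hpos : s δ α ∈ posRoots Φ Δ := by
    rcases mem_pos_or_neg hΔ hsαΦ with h | h
    · exact h
    · exfalso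
      obtain ⟨c, hc, hcn, hcs⟩ := hα.2
      obtain ⟨d, hd, hdn, hds⟩ := h.2
      set k : ℝ := 2 * (inner ℝ α δ : ℝ) / (inner ℝ δ δ : ℝ) with hk
      have hsδ : s δ α = α - k • δ := s_apply hs hδΦ α
      have hsum : (c + d).sum (fun v r => r • v)
          = (Finsupp.single δ k).sum (fun v r => r • v) := by
        rw [Finsupp.sum_add_index' (fun a => zero_smul ℝ a) (fun a b₁ b₂ => add_smul b₁ b₂ a),
          Finsupp.sum_single_index (by simp), ← hcs, ← hds, hsδ]
        abel
      have hcd : c + d = Finsupp.single δ k := by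
        refine coeff_unique hΔ ?_ ?_ hsum
        · refine Set.Subset.trans ?_ (Set.union_subset hc hd)
          intro x hx
          simpa using Finsupp.support_add (g₁ := c) (g₂ := d) hx
        · intro x hx
          have := Finsupp.support_single_subset (a := δ) (b := k) hx
          simp at this
          exact this ▸ hδ
      have hcsupp : (c.support : Set V) ⊆ ({δ} : Set V) := by
        intro v hv
        by_contra hvδ
        simp only [Set.mem_singleton_iff] at hvδ
        have h1 : c v + d v = 0 := by
          have := congrArg (fun f => f v) hcd
          simp only [Finsupp.add_apply, Finsupp.single_apply] at this
          rwa [if_neg (fun h => hvδ h.symm)] at this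
        have hv' : c v ≠ 0 := Finsupp.mem_support_iff.mp (by exact_mod_cast hv)
        have := hcn v; have := hdn v
        have : c v = 0 := by linarith
        exact hv' this
      refine hnotspan ?_
      rw [hcs]
      exact nonnegComb_sum_mem_span hcsupp
  refine ⟨hpos, fun h => ?_⟩
  have : α = -δ := by
    have := congrArg (s δ) h
    rwa [s_s hΦ hs hδΦ, s_self hΦ hs hδΦ] at this
  refine not_pos_and_neg hΦ hΔ (⟨hδΦ, nonneg_single hδ⟩ : δ ∈ posRoots Φ Δ) ⟨hδΦ, ?_⟩
  obtain ⟨c, hc, hcn, hcs⟩ := hα.2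
  exact ⟨c, hc, hcn, this ▸ hcs⟩

end RSAux
namespace RSAux

variable {V : Type*} [NormedAddCommGroup V] [InnerProductSpace ℝ V]
variable {Φ Δ : Set V} {s : V → V ≃ₗ[ℝ] V}

lemma neg_rootsIn (hΦ : IsRootSystem Φ) {A : Set V} {α : V} (hα : α ∈ rootsIn Φ A) :
    -α ∈ rootsIn Φ A :=
  ⟨neg_mem hΦ hα.1, Submodule.neg_mem _ hα.2⟩

lemma weylGroupOf_mono {A B : Set V} (h : A ⊆ B) : weylGroupOf A s ≤ weylGroupOf B s :=
  Subgroup.closure_mono (Set.image_mono h)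

/-- Words in `A` (with `A ⊆ Φ`) preserve `Φ_A`. -/
lemma wordProd_rootsIn (hΦ : IsRootSystem Φ) (hs : IsReflectionFamily Φ s) {A : Set V}
    (hA : A ⊆ Φ) {l : List V} (hl : ∀ δ ∈ l, δ ∈ A) {α : V} (hα : α ∈ rootsIn Φ A) :
    wordProd s l α ∈ rootsIn Φ A :=
  ⟨wordProd_mem_Φ hΦ hs (fun δ hδ => hA (hl δ hδ)) hα.1, wordProd_mem_span hs hA hl hα.2⟩

lemma mem_weylGroup_rootsIn (hΦ : IsRootSystem Φ) (hs : IsReflectionFamily Φ s) {A : Set V}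
    (hA : A ⊆ Φ) {u : V ≃ₗ[ℝ] V} (hu : u ∈ weylGroupOf A s) {α : V} (hα : α ∈ rootsIn Φ A) :
    u α ∈ rootsIn Φ A := by
  obtain ⟨l, hl, rfl⟩ := exists_word hΦ hs hA hu
  exact wordProd_rootsIn hΦ hs hA hl hα

lemma mem_weylGroup_Φ (hΦ : IsRootSystem Φ) (hs : IsReflectionFamily Φ s) {A : Set V}
    (hA : A ⊆ Φ) {u : V ≃ₗ[ℝ] V} (hu : u ∈ weylGroupOf A s) {α : V} (hα : α ∈ Φ) :
    u α ∈ Φ := by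
  obtain ⟨l, hl, rfl⟩ := exists_word hΦ hs hA hu
  exact wordProd_mem_Φ hΦ hs (fun δ hδ => hA (hl δ hδ)) hα

/-- `W_I` preserves `Φ⁺ \ Φ_I` for `I ⊆ Δ`. -/
lemma mem_weylGroup_pos_sdiff (hΦ : IsRootSystem Φ) (hΔ : IsBase Φ Δ)
    (hs : IsReflectionFamily Φ s) {I : Set V} (hI : I ⊆ Δ) {u : V ≃ₗ[ℝ] V}
    (hu : u ∈ weylGroupOf I s) {β : V} (hβ : β ∈ posRoots Φ Δ) (hβI : β ∉ rootsIn Φ I) :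
    u β ∈ posRoots Φ Δ ∧ u β ∉ rootsIn Φ I := by
  have hIΦ : I ⊆ Φ := fun x hx => hΔ.subset (hI hx)
  obtain ⟨l, hl, rfl⟩ := exists_word hΦ hs hIΦ hu
  clear hu
  induction l with
  | nil => simpa using ⟨hβ, hβI⟩
  | cons δ l ih =>
    have hδI := hl δ (List.mem_cons_self)
    have hδΦ := hIΦ hδI
    obtain ⟨h1, h2⟩ := ih (fun x hx => hl x (List.mem_cons_of_mem _ hx))
    set γ := wordProd s l β with hγ
    rw [wordProd_cons, mul_apply]
    have hγδ : γ ≠ δ := by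
      intro h
      exact h2 (h ▸ ⟨hδΦ, Submodule.subset_span hδI⟩)
    refine ⟨(s_simple_pos hΦ hΔ hs (hI hδI) h1 hγδ).1, fun hmem => ?_⟩
    refine h2 ?_
    have : γ = s δ (s δ γ) := (s_s hΦ hs hδΦ γ).symm
    rw [this]
    refine ⟨s_mem hΦ hs hδΦ hmem.1, ?_⟩
    rw [s_apply hs hδΦ]
    exact Submodule.sub_mem _ hmem.2 (Submodule.smul_mem _ _ (Submodule.subset_span hδI))

/-- `W_I` preserves `Φ⁻ \ Φ_I` for `I ⊆ Δ`. -/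
lemma mem_weylGroup_neg_sdiff (hΦ : IsRootSystem Φ) (hΔ : IsBase Φ Δ)
    (hs : IsReflectionFamily Φ s) {I : Set V} (hI : I ⊆ Δ) {u : V ≃ₗ[ℝ] V}
    (hu : u ∈ weylGroupOf I s) {β : V} (hβ : β ∈ negRoots Φ Δ) (hβI : β ∉ rootsIn Φ I) :
    u β ∈ negRoots Φ Δ ∧ u β ∉ rootsIn Φ I := by
  have h1 : -β ∈ posRoots Φ Δ := (neg_pos_iff_neg hΦ).mp hβ
  have h2 : -β ∉ rootsIn Φ I := fun h => hβI (by simpa using neg_rootsIn hΦ h)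
  obtain ⟨h3, h4⟩ := mem_weylGroup_pos_sdiff hΦ hΔ hs hI hu h1 h2
  rw [map_neg] at h3 h4
  constructor
  · rw [neg_pos_iff_neg hΦ]; exact h3
  · intro h; exact h4 (neg_rootsIn hΦ h)

/-- A positive root lying in the span of `L ⊆ Δ` is a nonneg combination of `L`. -/
lemma pos_rootsIn_comb (hΔ : IsBase Φ Δ) {L : Set V} (hL : L ⊆ Δ) {α : V}
    (hα : α ∈ posRoots Φ Δ) (hsp : α ∈ Submodule.span ℝ L) :
    ∃ c : V →₀ ℝ, (c.support : Set V) ⊆ L ∧ (∀ v, 0 ≤ c v) ∧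
      α = c.sum (fun v r => r • v) := by
  obtain ⟨c, hc, hcn, hcs⟩ := hα.2
  obtain ⟨e, he, hes⟩ := Submodule.mem_span_set.mp hsp
  have : c = e := coeff_unique hΔ hc (Set.Subset.trans he hL) (by rw [← hcs, hes])
  subst this
  exact ⟨c, he, hcn, hcs⟩

/-- If a linear equivalence sends every element of `L` to a positive root, it sends every
root in `Φ_L⁺` into `Φ⁺`, provided the image is a root. -/
lemma image_pos (hΦ : IsRootSystem Φ) (hΔ : IsBase Φ Δ) {L : Set V} (hL : L ⊆ Δ)
    {y : V ≃ₗ[ℝ] V} (hy : ∀ δ ∈ L, y δ ∈ posRoots Φ Δ) {α : V}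
    (hα : α ∈ posRootsIn Φ Δ L) (hyα : y α ∈ Φ) : y α ∈ posRoots Φ Δ := by
  obtain ⟨c, hc, hcn, hcs⟩ := pos_rootsIn_comb hΔ hL hα.2 hα.1.2
  refine ⟨hyα, ?_⟩
  have : y α = c.sum (fun v r => r • y v) := by
    rw [hcs, map_finsuppSum]
    simp
  rw [this, Finsupp.sum]
  refine Finset.sum_induction _ _ (fun a b ha hb => nonneg_add ha hb) nonneg_zero ?_
  intro v hv
  exact nonneg_smul (hcn v) (hy v (hc hv)).2

end RSAux
namespace RSAux

variable {V : Type*} [NormedAddCommGroup V] [InnerProductSpace ℝ V]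
variable {Φ Δ : Set V} {s : V → V ≃ₗ[ℝ] V}

/-- Exchange lemma: if a word sends the positive root `γ` to a negative root, the word
multiplied by `s γ` can be rewritten as a word that is shorter by one letter. -/
lemma exchange (hΦ : IsRootSystem Φ) (hΔ : IsBase Φ Δ) (hs : IsReflectionFamily Φ s)
    {A : Set V} (hA : A ⊆ Δ) :
    ∀ l : List V, (∀ δ ∈ l, δ ∈ A) → ∀ γ ∈ posRoots Φ Δ,
      wordProd s l γ ∈ negRoots Φ Δ →
      ∃ m : List V, (∀ δ ∈ m, δ ∈ A) ∧ m.length + 1 = l.length ∧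
        wordProd s l * s γ = wordProd s m := by
  intro l
  induction l with
  | nil =>
    intro _ γ hγ hneg
    exact absurd (not_pos_and_neg hΦ hΔ hγ (by simpa using hneg)) (fun h => h)
  | cons δ l ih =>
    intro hl γ hγ hneg
    have hδA := hl δ (List.mem_cons_self)
    have hδΔ := hA hδA
    have hδΦ := hΔ.subset hδΔ
    have hlA : ∀ x ∈ l, x ∈ A := fun x hx => hl x (List.mem_cons_of_mem _ hx)
    have hlΦ : ∀ x ∈ l, x ∈ Φ := fun x hx => hΔ.subset (hA (hlA x hx))
    have hβΦ : wordProd s l γ ∈ Φ := wordProd_mem_Φ hΦ hs hlΦ hγ.1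
    rcases mem_pos_or_neg hΔ hβΦ with hpos | hneg'
    · -- `wordProd s l γ` is positive but `s δ` of it is negative, so it equals `δ`.
      have hne : wordProd s l γ = δ := by
        by_contra hne
        rw [wordProd_cons, mul_apply] at hneg
        exact not_pos_and_neg hΦ hΔ (s_simple_pos hΦ hΔ hs hδΔ hpos hne).1 hneg
      -- conjugation: s δ = w' * s γ * w'⁻¹
      have hconj : s δ = wordProd s l * s γ * (wordProd s l)⁻¹ := by
        have := s_conj hΦ hs (wordProd_preservesInner hΦ hs hlΦ) hγ.1 (hne ▸ hδΦ)
        rwa [hne] at this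
      refine ⟨l, hlA, by simp, ?_⟩
      rw [wordProd_cons, hconj]
      group
      rw [mul_assoc, s_mul_s hΦ hs hγ.1, mul_one]
    · obtain ⟨m, hm, hlen, heq⟩ := ih hlA γ hγ hneg'
      refine ⟨δ :: m, ?_, by simpa using hlen, ?_⟩
      · intro x hx
        rcases List.mem_cons.mp hx with rfl | hx
        exacts [hδA, hm x hx]
      · rw [wordProd_cons, wordProd_cons, mul_assoc, heq]

/-- An element of `W_L` mapping all of `Φ_L⁺` into `Φ⁺` is the identity (word version). -/
lemma word_eq_one (hΦ : IsRootSystem Φ) (hΔ : IsBase Φ Δ) (hs : IsReflectionFamily Φ s)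
    {L : Set V} (hL : L ⊆ Δ) :
    ∀ n : ℕ, ∀ l : List V, l.length ≤ n → (∀ δ ∈ l, δ ∈ L) →
      (∀ α ∈ posRootsIn Φ Δ L, wordProd s l α ∈ posRoots Φ Δ) →
      wordProd s l = 1 := by
  intro n
  induction n with
  | zero =>
    intro l hlen _ _
    rw [Nat.le_zero, List.length_eq_zero_iff] at hlen
    simp [hlen]
  | succ n ih =>
    intro l hlen hlL hlpos
    rcases List.eq_nil_or_concat l with rfl | ⟨l', δ, rfl⟩
    · simp
    · have hδL : δ ∈ L := hlL δ (by simp)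
      have hδΔ := hL hδL
      have hδΦ := hΔ.subset hδΔ
      have hδpos : δ ∈ posRootsIn Φ Δ L :=
        ⟨⟨hδΦ, Submodule.subset_span hδL⟩, ⟨hδΦ, nonneg_single hδΔ⟩⟩
      have hl'L : ∀ x ∈ l', x ∈ L := fun x hx => hlL x (by simp [hx])
      have hval : wordProd s (l'.concat δ) δ = -(wordProd s l' δ) := by
        rw [wordProd_concat, mul_apply, s_self hΦ hs hδΦ, map_neg]
      have hwδpos : wordProd s (l'.concat δ) δ ∈ posRoots Φ Δ := hlpos δ hδpos
      have hneg : wordProd s l' δ ∈ negRoots Φ Δ := by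
        rw [neg_pos_iff_neg hΦ, ← hval]
        exact hwδpos
      obtain ⟨m, hmL, hmlen, heq⟩ := exchange hΦ hΔ hs hL l' hl'L δ
        ⟨hδΦ, nonneg_single hδΔ⟩ hneg
      have hws : wordProd s (l'.concat δ) = wordProd s m := by
        rw [wordProd_concat, heq]
      rw [hws]
      refine ih m ?_ hmL ?_
      · have h1 : l'.length + 1 ≤ n + 1 := by simpa using hlen
        omega
      · intro α hα
        rw [← hws]
        exact hlpos α hα

/-- An element of `W_L` mapping all of `Φ_L⁺` into `Φ⁺` is the identity. -/
lemma eq_one_of_no_inversion (hΦ : IsRootSystem Φ) (hΔ : IsBase Φ Δ)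
    (hs : IsReflectionFamily Φ s) {L : Set V} (hL : L ⊆ Δ) {u : V ≃ₗ[ℝ] V}
    (hu : u ∈ weylGroupOf L s)
    (hpos : ∀ α ∈ posRootsIn Φ Δ L, u α ∈ posRoots Φ Δ) : u = 1 := by
  obtain ⟨l, hl, rfl⟩ := exists_word hΦ hs (fun x hx => hΔ.subset (hL hx)) hu
  exact word_eq_one hΦ hΔ hs hL l.length l le_rfl hl hpos

end RSAux
namespace RSAux

variable {V : Type*} [NormedAddCommGroup V] [InnerProductSpace ℝ V]
variable {Φ Δ : Set V} {s : V → V ≃ₗ[ℝ] V}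

lemma exists_min_rep (hΦ : IsRootSystem Φ) (hΔ : IsBase Φ Δ) (hs : IsReflectionFamily Φ s)
    {L : Set V} (hL : L ⊆ Δ) {w : V ≃ₗ[ℝ] V} (hw : w ∈ weylGroupOf Φ s) :
    ∀ n : ℕ, ∀ u ∈ weylGroupOf L s,
      {α | α ∈ posRootsIn Φ Δ L ∧ (u * w)⁻¹ α ∈ negRoots Φ Δ}.ncard ≤ n →
      ∃ u' ∈ weylGroupOf L s, ∀ δ ∈ L, (u' * w)⁻¹ δ ∈ posRoots Φ Δ := by
  have hLΦ : L ⊆ Φ := fun x hx => hΔ.subset (hL hx)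
  intro n
  induction n with
  | zero =>
    intro u hu hcard
    refine ⟨u, hu, fun δ hδ => ?_⟩
    set N := {α | α ∈ posRootsIn Φ Δ L ∧ (u * w)⁻¹ α ∈ negRoots Φ Δ} with hN
    have hNfin : N.Finite := hΦ.finite.subset (fun α hα => hα.1.1.1)
    have hNempty : N = ∅ := by
      rw [← Set.ncard_eq_zero hNfin] at *
      omega
    have hδΦ := hLΦ hδ
    have huw : (u * w)⁻¹ ∈ weylGroupOf Φ s :=
      Subgroup.inv_mem _ (Subgroup.mul_mem _ (weylGroupOf_mono hLΦ hu) hw)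
    have hδ' : (u * w)⁻¹ δ ∈ Φ := mem_weylGroup_Φ hΦ hs subset_rfl huw hδΦ
    rcases mem_pos_or_neg hΔ hδ' with h | h
    · exact h
    · exfalso
      have : δ ∈ N := ⟨⟨⟨hδΦ, Submodule.subset_span hδ⟩, ⟨hδΦ, nonneg_single (hL hδ)⟩⟩, h⟩
      rw [hNempty] at this
      exact this
  | succ n ih =>
    intro u hu hcard
    by_cases hall : ∀ δ ∈ L, (u * w)⁻¹ δ ∈ posRoots Φ Δ
    · exact ⟨u, hu, hall⟩
    · push_neg at hall
      obtain ⟨δ, hδL, hδnpos⟩ := hall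
      have hδΔ := hL hδL
      have hδΦ := hLΦ hδL
      have huw : (u * w)⁻¹ ∈ weylGroupOf Φ s :=
        Subgroup.inv_mem _ (Subgroup.mul_mem _ (weylGroupOf_mono hLΦ hu) hw)
      have hδ' : (u * w)⁻¹ δ ∈ Φ := mem_weylGroup_Φ hΦ hs subset_rfl huw hδΦ
      have hδneg : (u * w)⁻¹ δ ∈ negRoots Φ Δ := by
        rcases mem_pos_or_neg hΔ hδ' with h | h
        exacts [absurd h hδnpos, h]
      set N := {α | α ∈ posRootsIn Φ Δ L ∧ (u * w)⁻¹ α ∈ negRoots Φ Δ} with hN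
      have hNfin : N.Finite := hΦ.finite.subset (fun α hα => hα.1.1.1)
      have hδN : δ ∈ N :=
        ⟨⟨⟨hδΦ, Submodule.subset_span hδL⟩, ⟨hδΦ, nonneg_single hδΔ⟩⟩, hδneg⟩
      set u₂ := s δ * u with hu₂
      have hu₂mem : u₂ ∈ weylGroupOf L s :=
        Subgroup.mul_mem _ (Subgroup.subset_closure ⟨δ, hδL, rfl⟩) hu
      have hkey : ∀ x : V, (u₂ * w)⁻¹ x = (u * w)⁻¹ (s δ x) := by
        intro x
        rw [hu₂, mul_assoc, mul_inv_rev, mul_apply, s_inv hΦ hs hδΦ]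
      set N₂ := {α | α ∈ posRootsIn Φ Δ L ∧ (u₂ * w)⁻¹ α ∈ negRoots Φ Δ} with hN₂
      have himg : N₂ = s δ '' (N \ {δ}) := by
        ext α
        constructor
        · rintro ⟨hαP, hαneg⟩
          rw [hkey] at hαneg
          have hαδ : α ≠ δ := by
            rintro rfl
            rw [s_self hΦ hs hδΦ, map_neg] at hαneg
            have h' := (neg_pos_iff_neg hΦ).mp hαneg
            rw [neg_neg] at h'
            exact not_pos_and_neg hΦ hΔ h' hδneg
          have hsp := s_simple_pos hΦ hΔ hs hδΔ hαP.2 hαδ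
          have hspan : s δ α ∈ Submodule.span ℝ L := by
            rw [s_apply hs hδΦ]
            exact Submodule.sub_mem _ hαP.1.2
              (Submodule.smul_mem _ _ (Submodule.subset_span hδL))
          exact ⟨s δ α, ⟨⟨⟨⟨hsp.1.1, hspan⟩, hsp.1⟩, hαneg⟩, hsp.2⟩, s_s hΦ hs hδΦ α⟩
        · rintro ⟨β, ⟨⟨hβP, hβneg⟩, hβδ⟩, rfl⟩
          simp only [Set.mem_singleton_iff] at hβδ
          have hsp := s_simple_pos hΦ hΔ hs hδΔ hβP.2 hβδ
          have hspan : s δ β ∈ Submodule.span ℝ L := by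
            rw [s_apply hs hδΦ]
            exact Submodule.sub_mem _ hβP.1.2
              (Submodule.smul_mem _ _ (Submodule.subset_span hδL))
          refine ⟨⟨⟨hsp.1.1, hspan⟩, hsp.1⟩, ?_⟩
          rw [hkey, s_s hΦ hs hδΦ]
          exact hβneg
      have hcard₂ : N₂.ncard ≤ n := by
        rw [himg, Set.ncard_image_of_injective _ (s δ).injective,
          Set.ncard_diff_singleton_of_mem hδN]
        have hpos : 0 < N.ncard := (Set.ncard_pos hNfin).mpr ⟨δ, hδN⟩
        omega
      exact ih u₂ hu₂mem hcard₂

end RSAux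
namespace RSAux

variable {V : Type*} [NormedAddCommGroup V] [InnerProductSpace ℝ V]
variable {Φ Δ : Set V} {s : V → V ≃ₗ[ℝ] V}

lemma coset_indep (hΦ : IsRootSystem Φ) (hΔ : IsBase Φ Δ) (hs : IsReflectionFamily Φ s)
    {I L : Set V} (hI : I ⊆ Δ) (hL : L ⊆ Δ) {w u v : V ≃ₗ[ℝ] V}
    (hu : u ∈ weylGroupOf L s) (hv : v ∈ weylGroupOf I s)
    (h : ⇑w⁻¹ '' rootsIn Φ L ∩ rootsIn Φ I = ∅) :
    ⇑(u * w * v)⁻¹ '' rootsIn Φ L ∩ rootsIn Φ I = ∅ := by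
  have hLΦ : L ⊆ Φ := fun x hx => hΔ.subset (hL hx)
  have hIΦ : I ⊆ Φ := fun x hx => hΔ.subset (hI hx)
  rw [Set.eq_empty_iff_forall_notMem] at h ⊢
  rintro β ⟨⟨α, hα, rfl⟩, hβI⟩
  have hexp : (u * w * v)⁻¹ α = v⁻¹ (w⁻¹ (u⁻¹ α)) := by
    rw [mul_inv_rev, mul_inv_rev, mul_apply, mul_apply]
  have hαL : u⁻¹ α ∈ rootsIn Φ L :=
    mem_weylGroup_rootsIn hΦ hs hLΦ (Subgroup.inv_mem _ hu) hα
  have hvI : v ((u * w * v)⁻¹ α) ∈ rootsIn Φ I :=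
    mem_weylGroup_rootsIn hΦ hs hIΦ hv hβI
  have hveq : v ((u * w * v)⁻¹ α) = w⁻¹ (u⁻¹ α) := by
    rw [hexp]
    exact v.apply_symm_apply _
  rw [hveq] at hvI
  exact h (w⁻¹ (u⁻¹ α)) ⟨⟨u⁻¹ α, hαL, rfl⟩, hvI⟩

end RSAux

open RSAux in

/-- For `I, L ⊆ Π`: every double coset `W_L w W_I` with
`w⁻¹(Φ_L) ∩ Φ_I = ∅` contains exactly one left coset `w'W_I` with
`w'⁻¹(Φ_L⁺) ⊆ Φ⁺ \ Φ_I`; consequently the projection `W/W_I → W_L\W/W_I` restricts to a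
bijection from `{wW_I ∣ w⁻¹(Φ_L⁺) ⊆ Φ⁺ \ Φ_I}` onto
`{W_L w W_I ∣ w⁻¹(Φ_L) ∩ Φ_I = ∅}` (the latter condition being independent of the
representative).  This is expressed below at the level of elements: the condition
`w⁻¹(Φ_L⁺) ⊆ Φ⁺ \ Φ_I` implies `w⁻¹(Φ_L) ∩ Φ_I = ∅` (well-definedness into the target);
the condition `w⁻¹(Φ_L) ∩ Φ_I = ∅` only depends on the double coset of `w`;
every double coset with `w⁻¹(Φ_L) ∩ Φ_I = ∅` contains an element satisfying
`w'⁻¹(Φ_L⁺) ⊆ Φ⁺ \ Φ_I` (surjectivity/existence); and two elements of a common double coset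
both satisfying `·⁻¹(Φ_L⁺) ⊆ Φ⁺ \ Φ_I` lie in a common left `W_I`-coset
(uniqueness/injectivity). -/
theorem statement5 (Φ Δ : Set V) (hΦ : IsRootSystem Φ) (hΔ : IsBase Φ Δ)
    (s : V → V ≃ₗ[ℝ] V) (hs : IsReflectionFamily Φ s)
    (I L : Set V) (hI : I ⊆ Δ) (hL : L ⊆ Δ) :
    (∀ w ∈ weylGroupOf Φ s,
      ⇑w⁻¹ '' posRootsIn Φ Δ L ⊆ posRoots Φ Δ \ rootsIn Φ I →
        ⇑w⁻¹ '' rootsIn Φ L ∩ rootsIn Φ I = ∅) ∧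
    (∀ w ∈ weylGroupOf Φ s, ∀ u ∈ weylGroupOf L s, ∀ v ∈ weylGroupOf I s,
      (⇑w⁻¹ '' rootsIn Φ L ∩ rootsIn Φ I = ∅ ↔
        ⇑(u * w * v)⁻¹ '' rootsIn Φ L ∩ rootsIn Φ I = ∅)) ∧
    (∀ w ∈ weylGroupOf Φ s, ⇑w⁻¹ '' rootsIn Φ L ∩ rootsIn Φ I = ∅ →
      ∃ u ∈ weylGroupOf L s, ∃ v ∈ weylGroupOf I s,
        ⇑(u * w * v)⁻¹ '' posRootsIn Φ Δ L ⊆ posRoots Φ Δ \ rootsIn Φ I) ∧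
    (∀ w₁ ∈ weylGroupOf Φ s, ∀ w₂ ∈ weylGroupOf Φ s,
      ⇑w₁⁻¹ '' posRootsIn Φ Δ L ⊆ posRoots Φ Δ \ rootsIn Φ I →
      ⇑w₂⁻¹ '' posRootsIn Φ Δ L ⊆ posRoots Φ Δ \ rootsIn Φ I →
      (∃ u ∈ weylGroupOf L s, ∃ v ∈ weylGroupOf I s, w₂ = u * w₁ * v) →
      w₁⁻¹ * w₂ ∈ weylGroupOf I s) := by
  have hLΦ : L ⊆ Φ := fun x hx => hΔ.subset (hL hx)
  have hIΦ : I ⊆ Φ := fun x hx => hΔ.subset (hI hx)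
  refine ⟨?_, ?_, ?_, ?_⟩
  · -- Part 1
    intro w hw hsub
    rw [Set.eq_empty_iff_forall_notMem]
    rintro β ⟨⟨α, hαL, rfl⟩, hβI⟩
    rcases mem_pos_or_neg hΔ hαL.1 with hp | hn
    · exact (hsub ⟨α, ⟨hαL, hp⟩, rfl⟩).2 hβI
    · have hnegα : -α ∈ posRootsIn Φ Δ L :=
        ⟨neg_rootsIn hΦ hαL, (neg_pos_iff_neg hΦ).mp hn⟩
      have h2 := hsub ⟨-α, hnegα, rfl⟩
      rw [map_neg] at h2
      exact h2.2 (neg_rootsIn hΦ hβI)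
  · -- Part 2
    intro w hw u hu v hv
    constructor
    · exact coset_indep hΦ hΔ hs hI hL hu hv
    · intro h
      have h' := coset_indep hΦ hΔ hs hI hL (Subgroup.inv_mem _ hu) (Subgroup.inv_mem _ hv) h
      have heq : u⁻¹ * (u * w * v) * v⁻¹ = w := by group
      rwa [heq] at h'
  · -- Part 3 : existence
    intro w hw hdis
    obtain ⟨u, hu, hupos⟩ := exists_min_rep hΦ hΔ hs hL hw
      {α | α ∈ posRootsIn Φ Δ L ∧ ((1 : V ≃ₗ[ℝ] V) * w)⁻¹ α ∈ negRoots Φ Δ}.ncard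
      1 (Subgroup.one_mem _) le_rfl
    refine ⟨u, hu, 1, Subgroup.one_mem _, ?_⟩
    rw [mul_one]
    rintro β ⟨α, hα, rfl⟩
    have huwΦ : (u * w)⁻¹ ∈ weylGroupOf Φ s :=
      Subgroup.inv_mem _ (Subgroup.mul_mem _ (weylGroupOf_mono hLΦ hu) hw)
    refine ⟨image_pos hΦ hΔ hL hupos hα
      (mem_weylGroup_Φ hΦ hs subset_rfl huwΦ hα.1.1), ?_⟩
    intro hmem
    have hexp : (u * w)⁻¹ α = w⁻¹ (u⁻¹ α) := by
      rw [mul_inv_rev, mul_apply]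
    have hαL : u⁻¹ α ∈ rootsIn Φ L :=
      mem_weylGroup_rootsIn hΦ hs hLΦ (Subgroup.inv_mem _ hu) hα.1
    rw [Set.eq_empty_iff_forall_notMem] at hdis
    rw [hexp] at hmem
    exact hdis (w⁻¹ (u⁻¹ α)) ⟨⟨u⁻¹ α, hαL, rfl⟩, hmem⟩
  · -- Part 4 : uniqueness
    intro w₁ hw₁ w₂ hw₂ h1 h2 hex
    obtain ⟨u, hu, v, hv, heq⟩ := hex
    subst heq
    have huinv : u⁻¹ = 1 := by
      refine eq_one_of_no_inversion hΦ hΔ hs hL (Subgroup.inv_mem _ hu) ?_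
      intro α hα
      have huαL : u⁻¹ α ∈ rootsIn Φ L :=
        mem_weylGroup_rootsIn hΦ hs hLΦ (Subgroup.inv_mem _ hu) hα.1
      rcases mem_pos_or_neg hΔ huαL.1 with hp | hn
      · exact hp
      exfalso
      have hnegP : -(u⁻¹ α) ∈ posRootsIn Φ Δ L :=
        ⟨neg_rootsIn hΦ huαL, (neg_pos_iff_neg hΦ).mp hn⟩
      have h1' := h1 ⟨-(u⁻¹ α), hnegP, rfl⟩
      rw [map_neg] at h1'
      -- h1' : -(w₁⁻¹ (u⁻¹ α)) ∈ posRoots \ rootsIn I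
      have hneg' : w₁⁻¹ (u⁻¹ α) ∈ negRoots Φ Δ := by
        rw [neg_pos_iff_neg hΦ]
        exact h1'.1
      have hnotI : w₁⁻¹ (u⁻¹ α) ∉ rootsIn Φ I := by
        intro h
        exact h1'.2 (neg_rootsIn hΦ h)
      have hv' := mem_weylGroup_neg_sdiff hΦ hΔ hs hI (Subgroup.inv_mem _ hv) hneg' hnotI
      have hexp : (u * w₁ * v)⁻¹ α = v⁻¹ (w₁⁻¹ (u⁻¹ α)) := by
        rw [mul_inv_rev, mul_inv_rev, mul_apply, mul_apply]
      have h2' := h2 ⟨α, hα, rfl⟩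
      rw [hexp] at h2'
      exact not_pos_and_neg hΦ hΔ h2'.1 hv'.1
    have hu1 : u = 1 := by rwa [inv_eq_one] at huinv
    have hfin : w₁⁻¹ * (u * w₁ * v) = v := by
      rw [hu1]; group
    rw [hfin]
    exact hv
end
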